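/- arXiv:2105.03339 — 2 statements merged into one kernel-verified Lean document; each statement's English description precedes it below -/
import Mathlib

section
/- In the coupled-curve setting below, fix n >= 0 and a point u_bar in (0, e^{lambda n} a), and suppose that for i = 1,2 the function psi_n^i is continuous and monotonically increasing (i.e. admits continuous nondecreasing local lifts) on a neighborhood of u_bar, and is C^1 on that neighborhood except possibly at u_bar. Then: (ii) if psi_n^1(u_bar) and psi_n^2(u_bar) are both different from 0 and 1/2, then for i=1,2 the function zeta_n^i is continuous and monotonically increasing on a neighborhood of u_bar, and is C^1 there except possibly at u_bar (C^1 at u_bar whenever both psi_n^i are C^1 at u_bar); (iii) if psi_n^1(u_bar) is 0 or 1/2, then zeta_n^1 is continuous and monotonically increasing on a neighborhood of u_bar and C^1 there except possibly at u_bar. Statement (iii) also holds with the indices 1 and 2 interchanged. -/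
noncomputable section

open Real Set Filter Topology MeasureTheory
open scoped Classical

instance factOneLtZero : Fact ((0:ℝ) < 1) := ⟨zero_lt_one⟩

/-- The circle `𝕋 = ℝ/ℤ`. -/
abbrev Circ : Type := AddCircle (1 : ℝ)

/-- The projection `ℝ → 𝕋`. -/
def coeT (x : ℝ) : Circ := (x : Circ)

/-- The representative of a point of `𝕋` in `[0,1)` (identification of `𝕋` with `[0,1)`). -/
def rep (z : Circ) : ℝ := (AddCircle.equivIco 1 0 z : ℝ)

/-- `f : ℝ → 𝕋` has derivative `d` at `u`, computed via a local lift. -/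
def HasCircDerivAt (f : ℝ → Circ) (d : ℝ) (u : ℝ) : Prop :=
  ∃ F : ℝ → ℝ, (∀ᶠ v in nhds u, coeT (F v) = f v) ∧ HasDerivAt F d u

/-- `f : ℝ → 𝕋` is `C¹` on a neighborhood of `u` (via a local lift). -/
def IsC1At (f : ℝ → Circ) (u : ℝ) : Prop :=
  ∃ (F : ℝ → ℝ) (ε : ℝ), 0 < ε ∧ (∀ v ∈ Ioo (u - ε) (u + ε), coeT (F v) = f v) ∧
    ContDiffOn ℝ 1 F (Ioo (u - ε) (u + ε))

/-- `f : ℝ → 𝕋` is continuous and monotonically increasing on a neighborhood of `u`,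
i.e. admits a continuous nondecreasing local lift there. -/
def ContMonoNear (f : ℝ → Circ) (u : ℝ) : Prop :=
  ∃ (F : ℝ → ℝ) (ε : ℝ), 0 < ε ∧ (∀ v ∈ Ioo (u - ε) (u + ε), coeT (F v) = f v) ∧
    ContinuousOn F (Ioo (u - ε) (u + ε)) ∧ MonotoneOn F (Ioo (u - ε) (u + ε))

/-- `f : ℝ → 𝕋` is `C¹` on a neighborhood of `u`, except possibly at `u` itself. -/
def C1StarNear (f : ℝ → Circ) (u : ℝ) : Prop :=
  ∃ ε : ℝ, 0 < ε ∧ ∀ v ∈ Ioo (u - ε) (u + ε), v ≠ u → IsC1At f v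

/-- The number of the coordinates of `z = (z₁, z₂) ∈ 𝕋²` lying in the arc `(1/2, 1)`. -/
def cnt (z : Circ × Circ) : ℕ :=
  (if 1/2 < rep z.1 then 1 else 0) + (if 1/2 < rep z.2 then 1 else 0)

/-- The basic data of the model with `N = 2` inhibitory components: the constants
`λ, b, c, κ, c', a, β`, the function `Φ`, the (lifted) North-South flows `G i` generated by
the (lifted) `C²` vector fields `V i` vanishing exactly at `0` and `1/2` (mod 1), the arcs
`I_i^±` (via `δ_i^±`), and assumptions (A1)-(A2). -/
structure Base where
  lam : ℝ
  b : ℝ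
  c : ℝ
  kappa : ℕ
  c' : ℝ
  a : ℝ
  beta : ℝ
  lam_pos : 0 < lam
  b_mem : b ∈ Ioo (0:ℝ) 1
  c_mem : c ∈ Ioo (0:ℝ) 1
  kappa_pos : 0 < kappa
  c'_pos : 0 < c'
  a_pos : 0 < a
  beta_pos : 0 < beta
  /-- the feedback strength function `Φ : {0,1,2} → [0,1)` -/
  Phi : ℕ → ℝ
  Phi_zero : Phi 0 = 0
  Phi_mono : ∀ m n : ℕ, m < n → n ≤ 2 → Phi m < Phi n
  Phi_nonneg : ∀ n ≤ 2, 0 ≤ Phi n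
  Phi_lt_one : ∀ n ≤ 2, Phi n < 1
  /-- lifts of the vector fields generating the North-South flows -/
  V : Fin 2 → ℝ → ℝ
  /-- lifts of the North-South flows `g_i^t` -/
  G : Fin 2 → ℝ → ℝ → ℝ
  V_smooth : ∀ i, ContDiff ℝ 2 (V i)
  V_periodic : ∀ i x, V i (x + 1) = V i x
  V_zero_iff : ∀ i x, V i x = 0 ↔ ∃ n : ℤ, x = n ∨ x = n + 1/2
  V_deriv_zero_neg : ∀ i, deriv (V i) 0 < 0
  V_deriv_half_pos : ∀ i, 0 < deriv (V i) (1/2)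
  G_zero : ∀ i x, G i 0 x = x
  G_add : ∀ i s t x, G i (s + t) x = G i s (G i t x)
  G_periodic : ∀ i t x, G i t (x + 1) = G i t x + 1
  G_ode : ∀ i x t, HasDerivAt (fun s => G i s x) (V i (G i t x)) t
  /-- half-width of the arc `I_i^+` around the N-pole `1/2` -/
  deltaP : Fin 2 → ℝ
  /-- half-width of the arc `I_i^-` around the S-pole `0` -/
  deltaM : Fin 2 → ℝ
  deltaP_pos : ∀ i, 0 < deltaP i
  deltaM_pos : ∀ i, 0 < deltaM i
  /-- (A1), expansion part: `(g_i^t)' > e^λ` on `I_i^+` for `1-b ≤ t ≤ τ_max` -/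
  A1_exp : ∀ i, ∀ t ∈ Icc (1 - b) ((1 - b) * (1 - Phi 2)⁻¹),
    ∀ x ∈ Icc (1/2 - deltaP i) (1/2 + deltaP i), Real.exp lam < deriv (G i t) x
  /-- (A1), contraction part: `(g_i^t)' ≤ c` on `I_i^-` for `1-b ≤ t ≤ τ_max` -/
  A1_con : ∀ i, ∀ t ∈ Icc (1 - b) ((1 - b) * (1 - Phi 2)⁻¹),
    ∀ x ∈ Icc (-(deltaM i)) (deltaM i), deriv (G i t) x ≤ c
  /-- (A2): `g_i^t(I_i^+) ⊇ 𝕋 \ I_i^-` for `1-b ≤ t ≤ τ_max` -/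
  A2 : ∀ i, ∀ t ∈ Icc (1 - b) ((1 - b) * (1 - Phi 2)⁻¹),
    (coeT '' Icc (-(deltaM i)) (deltaM i))ᶜ ⊆
      (fun x => coeT (G i t x)) '' Icc (1/2 - deltaP i) (1/2 + deltaP i)

namespace Base

variable (B : Base)

/-- The maximal return time `τ_max = (1-b)(1-Φ(2))⁻¹`. -/
def tauMax : ℝ := (1 - B.b) * (1 - B.Phi 2)⁻¹

/-- The return time `τ(z₁,z₂) = (1-b)(1-Φ(#{i : z_i ∈ (1/2,1)}))⁻¹` from `Σ_b` to `Σ₀`. -/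
def tauT (z : Circ × Circ) : ℝ := (1 - B.b) * (1 - B.Phi (cnt z))⁻¹

/-- The North-South flow `g_i^t` on the circle. -/
def gT (i : Fin 2) (t : ℝ) (z : Circ) : Circ := coeT (B.G i t (rep z))

/-- The arc `I_i^+ = [1/2 - δ_i^+, 1/2 + δ_i^+] ⊆ 𝕋`. -/
def IiP (i : Fin 2) : Set Circ := coeT '' Icc (1/2 - B.deltaP i) (1/2 + B.deltaP i)

/-- The arc `I_i^- = [-δ_i^-, δ_i^-] ⊆ 𝕋`. -/
def IiM (i : Fin 2) : Set Circ := coeT '' Icc (-(B.deltaM i)) (B.deltaM i)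

/-- `d_i = dist(∂ I_i^-, ∂ g_i^{1-b}(I_i^+))`. -/
def dd (i : Fin 2) : ℝ :=
  sInf {r : ℝ | ∃ x ∈ frontier (B.IiM i),
    ∃ y ∈ frontier ((B.gT i (1 - B.b)) '' (B.IiP i)), r = dist x y}

end Base

/-- The full data of the model with `N = 2`: the base data together with `ε`, the lifted
rotation maps `R i` (local diffeomorphisms `r_i` of the circle of degree `deg i ≤ κ`)
satisfying (A3)-(A4), and the base points `x0 n` of the iterated curves. -/
structure Setting extends Base where
  eps : ℝ
  eps_pos : 0 < eps
  /-- lifts of the rotation maps `r_i : 𝕋 → 𝕋` -/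
  R : Fin 2 → ℝ → ℝ
  /-- the degrees of the `r_i` -/
  deg : Fin 2 → ℕ
  R_smooth : ∀ i, ContDiff ℝ 2 (R i)
  R_equiv : ∀ i x, R i (x + 1) = R i x + deg i
  deg_ge_one : ∀ i, 1 ≤ deg i
  deg_le_kappa : ∀ i, deg i ≤ toBase.kappa
  R_deriv_pos : ∀ i x, 0 < deriv (R i) x
  /-- (A3): `r_i' > ε⁻¹` wherever `r_i ∈ [d_i, 1 - d_i]` -/
  A3 : ∀ i x, rep (coeT (R i x)) ∈ Icc (toBase.dd i) (1 - toBase.dd i) →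
    eps⁻¹ < deriv (R i) x
  /-- (A4): `r_i' > c'` everywhere -/
  A4 : ∀ i x, toBase.c' < deriv (R i) x
  /-- the `x`-coordinates `x_n = π_x(γ_n(0))` determining `ι_n` -/
  x0 : ℕ → ℝ

namespace Setting

variable (S : Setting)

/-- The rotation map `r_i : 𝕋 → 𝕋`. -/
def rT (i : Fin 2) (z : Circ) : Circ := coeT (S.R i (rep z))

/-- `ι_n(u) = β u + x_n (mod 1)`. -/
def iota (n : ℕ) (u : ℝ) : Circ := coeT (S.toBase.beta * u + S.x0 n)

/-- `Φ₁`-image of a curve: `ψ(u) = θ(u) + (r₁(ι_n(u)), r₂(ι_n(u)))`. -/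
def psiOf (th : ℝ → Circ × Circ) (n : ℕ) (u : ℝ) : Circ × Circ :=
  ((th u).1 + S.rT 0 (S.iota n u), (th u).2 + S.rT 1 (S.iota n u))

/-- `Φ₂∘Φ₁`-image of a curve: `ζ(u) = (g₁^{τ(ψ(u))}(ψ¹(u)), g₂^{τ(ψ(u))}(ψ²(u)))`. -/
def zetaOf (th : ℝ → Circ × Circ) (n : ℕ) (u : ℝ) : Circ × Circ :=
  (S.toBase.gT 0 (S.toBase.tauT (S.psiOf th n u)) (S.psiOf th n u).1,
   S.toBase.gT 1 (S.toBase.tauT (S.psiOf th n u)) (S.psiOf th n u).2)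

/-- The iterated curves `θ_n`: `θ_0 ≡ (0,0)` and `θ_{n+1}(u) = ζ_n(e^{-λ} u)`. -/
def theta : ℕ → ℝ → Circ × Circ
  | 0 => fun _ => (0, 0)
  | n + 1 => fun u => S.zetaOf (theta n) n (Real.exp (-S.toBase.lam) * u)

/-- The curves `ψ_n`. -/
def psi (n : ℕ) (u : ℝ) : Circ × Circ := S.psiOf (S.theta n) n u

/-- The curves `ζ_n`. -/
def zeta (n : ℕ) (u : ℝ) : Circ × Circ := S.zetaOf (S.theta n) n u

/-- The component `ψ_n^i`. -/
def psiI (n : ℕ) (i : Fin 2) (u : ℝ) : Circ :=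
  if i = 0 then (S.psi n u).1 else (S.psi n u).2

/-- The component `ζ_n^i`. -/
def zetaI (n : ℕ) (i : Fin 2) (u : ℝ) : Circ :=
  if i = 0 then (S.zeta n u).1 else (S.zeta n u).2

/-- The length `e^{λ n} a` of the domain of the curves at step `n`. -/
def len (n : ℕ) : ℝ := Real.exp (S.toBase.lam * n) * S.toBase.a

end Setting

/-! ### Auxiliary lemmas for the proof of Lemma 4.1 (ii)-(iii) -/

section AuxCircle

theorem rep_coeT (x : ℝ) : rep (coeT x) = Int.fract x := by
  have := AddCircle.coe_equivIco_mk_apply (p := (1:ℝ)) x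
  simpa [rep, coeT] using this

theorem coeT_eq_iff {x y : ℝ} : coeT x = coeT y ↔ ∃ k : ℤ, y = x + k := by
  constructor
  · intro h
    have h1 : (x : Circ) = (y : Circ) := h
    rw [QuotientAddGroup.eq_iff_sub_mem] at h1
    obtain ⟨k, hk⟩ := AddSubgroup.mem_zmultiples_iff.mp h1
    rw [zsmul_eq_mul, mul_one] at hk
    exact ⟨-k, by push_cast; linarith [hk]⟩
  · rintro ⟨k, rfl⟩
    show (x : Circ) = ((x + k : ℝ) : Circ)
    rw [QuotientAddGroup.eq_iff_sub_mem]
    exact AddSubgroup.mem_zmultiples_iff.mpr ⟨-k, by rw [zsmul_eq_mul, mul_one]; push_cast; ring⟩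

theorem coeT_add_int (x : ℝ) (k : ℤ) : coeT (x + k) = coeT x :=
  (coeT_eq_iff.mpr ⟨k, rfl⟩).symm

/-- indicator of the upper half circle, on lifts -/
def Icnt (x : ℝ) : ℕ := if 1/2 < Int.fract x then 1 else 0

theorem Icnt_low {m : ℤ} {x : ℝ} (h1 : (m:ℝ) ≤ x) (h2 : x ≤ m + 1/2) : Icnt x = 0 := by
  have hfloor : ⌊x⌋ = m := by
    rw [Int.floor_eq_iff]
    exact ⟨h1, by push_cast; linarith⟩
  have hfr : Int.fract x = x - m := by rw [Int.fract, hfloor]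
  rw [Icnt, if_neg]
  rw [hfr]; linarith

theorem Icnt_high {m : ℤ} {x : ℝ} (h1 : (m:ℝ) + 1/2 < x) (h2 : x < m + 1) : Icnt x = 1 := by
  have hfloor : ⌊x⌋ = m := by
    rw [Int.floor_eq_iff]
    exact ⟨by linarith, by push_cast; linarith⟩
  have hfr : Int.fract x = x - m := by rw [Int.fract, hfloor]
  rw [Icnt, if_pos]
  rw [hfr]; linarith

theorem half_int_iff {x : ℝ} :
    (coeT x = coeT 0 ∨ coeT x = coeT (1/2)) ↔ ∃ m : ℤ, x = m ∨ x = m + 1/2 := by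
  constructor
  · rintro (h | h)
    · obtain ⟨k, hk⟩ := coeT_eq_iff.mp h.symm
      exact ⟨k, Or.inl (by linarith)⟩
    · obtain ⟨k, hk⟩ := coeT_eq_iff.mp h.symm
      exact ⟨k, Or.inr (by linarith)⟩
  · rintro ⟨m, rfl | rfl⟩
    · exact Or.inl (coeT_eq_iff.mpr ⟨-m, by push_cast; ring⟩)
    · exact Or.inr (coeT_eq_iff.mpr ⟨-m, by push_cast; ring⟩)

theorem no_half_int_lowmid {m : ℤ} {x : ℝ} (h1 : (m:ℝ) < x) (h2 : x < m + 1/2) :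
    ¬ ∃ k : ℤ, x = k ∨ x = k + 1/2 := by
  rintro ⟨k, rfl | rfl⟩
  · have h3 : m < k := by exact_mod_cast h1
    have h4 : k < m + 1 := by exact_mod_cast (by push_cast; linarith : (k:ℝ) < m + 1)
    omega
  · have h3 : m < k + 1 := by exact_mod_cast (by push_cast; linarith : (m:ℝ) < k + 1)
    have h4 : k < m := by exact_mod_cast (by linarith : (k:ℝ) < m)
    omega

theorem no_half_int_highmid {m : ℤ} {x : ℝ} (h1 : (m:ℝ) + 1/2 < x) (h2 : x < m + 1) :
    ¬ ∃ k : ℤ, x = k ∨ x = k + 1/2 := by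
  rintro ⟨k, rfl | rfl⟩
  · have h3 : m < k := by exact_mod_cast (by linarith : (m:ℝ) < k)
    have h4 : k < m + 1 := by exact_mod_cast (by push_cast; linarith : (k:ℝ) < m + 1)
    omega
  · have h3 : m < k := by exact_mod_cast (by linarith : (m:ℝ) < k)
    have h4 : k + 1 < m + 2 := by exact_mod_cast (by push_cast; linarith : (k:ℝ) + 1 < m + 2)
    omega

theorem no_half_int_left' {P x : ℝ} (hP : ∃ m : ℤ, P = m ∨ P = m + 1/2)
    (h1 : P - 1/4 < x) (h2 : x < P) : ¬ ∃ k : ℤ, x = k ∨ x = k + 1/2 := by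
  obtain ⟨m, rfl | rfl⟩ := hP
  · exact no_half_int_highmid (m := m - 1) (by push_cast; linarith) (by push_cast; linarith)
  · exact no_half_int_lowmid (m := m) (by linarith) (by linarith)

theorem no_half_int_right' {P x : ℝ} (hP : ∃ m : ℤ, P = m ∨ P = m + 1/2)
    (h1 : P < x) (h2 : x < P + 1/4) : ¬ ∃ k : ℤ, x = k ∨ x = k + 1/2 := by
  obtain ⟨m, rfl | rfl⟩ := hP
  · exact no_half_int_lowmid (m := m) (by linarith) (by linarith)
  · exact no_half_int_highmid (m := m) (by linarith) (by push_cast; linarith)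

theorem free_shift {y x : ℝ} (h : ¬ ∃ m : ℤ, y = m ∨ y = m + 1/2)
    (hc : coeT x = coeT y) : ¬ ∃ m : ℤ, x = m ∨ x = m + 1/2 := by
  obtain ⟨k, hk⟩ := coeT_eq_iff.mp hc
  rintro ⟨m, rfl | rfl⟩
  · exact h ⟨m + k, Or.inl (by rw [hk]; push_cast; ring)⟩
  · exact h ⟨m + k, Or.inr (by rw [hk]; push_cast; ring)⟩

end AuxCircle

section AuxFlow

/-- Abstract 1-D flow data. -/
structure IsFlowOf (V : ℝ → ℝ) (G : ℝ → ℝ → ℝ) (K : NNReal) : Prop where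
  lip : LipschitzWith K V
  cont : Continuous V
  zero : ∀ x, G 0 x = x
  add : ∀ s t x, G (s + t) x = G s (G t x)
  ode : ∀ x t, HasDerivAt (fun s => G s x) (V (G t x)) t

namespace IsFlowOf

variable {V : ℝ → ℝ} {G : ℝ → ℝ → ℝ} {K : NNReal}

theorem neg (h : IsFlowOf V G K) :
    IsFlowOf (fun x => -V x) (fun t x => G (-t) x) K where
  lip := h.lip.neg
  cont := h.cont.neg
  zero := by intro x; simpa using h.zero x
  add := by
    intro s t x
    have : (-(s + t)) = (-s) + (-t) := by ring
    rw [this, h.add]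
  ode := by
    intro x t
    have h1 := (h.ode x (-t)).comp t (hasDerivAt_neg t)
    rw [mul_neg, mul_one] at h1
    exact h1

theorem unique (h : IsFlowOf V G K) {f g : ℝ → ℝ} {t₀ : ℝ}
    (hf : ∀ t, HasDerivAt f (V (f t)) t) (hg : ∀ t, HasDerivAt g (V (g t)) t)
    (heq : f t₀ = g t₀) (t : ℝ) : f t = g t := by
  set a : ℝ := min t₀ t - 1
  set b : ℝ := max t₀ t + 1
  have ht₀ : t₀ ∈ Ioo a b := by
    constructor
    · simp only [a]; have := min_le_left t₀ t; linarith
    · simp only [b]; have := le_max_left t₀ t; linarith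
  have ht : t ∈ Ioo a b := by
    constructor
    · simp only [a]; have := min_le_right t₀ t; linarith
    · simp only [b]; have := le_max_right t₀ t; linarith
  exact ODE_solution_unique_of_mem_Ioo
    (fun _ _ => h.lip.lipschitzOnWith (s := univ)) ht₀
    (fun s _ => ⟨hf s, mem_univ _⟩) (fun s _ => ⟨hg s, mem_univ _⟩) heq ht

theorem fixed (h : IsFlowOf V G K) {x : ℝ} (hx : V x = 0) (t : ℝ) : G t x = x :=
  h.unique (f := fun s => G s x) (g := fun _ => x) (t₀ := 0)
    (fun s => h.ode x s)
    (fun s => by simpa [hx] using (hasDerivAt_const s x)) (h.zero x) t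

theorem inj (h : IsFlowOf V G K) (t : ℝ) {x y : ℝ} (hxy : G t x = G t y) : x = y := by
  have h1 : G (-t) (G t x) = G (-t) (G t y) := by rw [hxy]
  rw [← h.add, ← h.add] at h1
  simpa [h.zero] using h1

theorem cont_traj (h : IsFlowOf V G K) (x : ℝ) : Continuous (fun s => G s x) :=
  Differentiable.continuous (fun s => (h.ode x s).differentiableAt)

theorem strictMono (h : IsFlowOf V G K) (t : ℝ) : StrictMono (fun x => G t x) := by
  intro x y hxy
  rcases lt_trichotomy (G t x) (G t y) with hlt | heq | hgt
  · exact hlt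
  · exact absurd (h.inj t heq) (ne_of_lt hxy)
  · exfalso
    set D : ℝ → ℝ := fun s => G s y - G s x with hD
    have hDc : Continuous D := (h.cont_traj y).sub (h.cont_traj x)
    have hD0 : 0 < D 0 := by simp [hD, h.zero, hxy]
    have hDt : D t < 0 := by simp [hD]; linarith
    have h0m : (0:ℝ) ∈ uIcc (D 0) (D t) := by
      rw [Set.mem_uIcc]; right; constructor <;> linarith
    obtain ⟨s, _, hs0⟩ := intermediate_value_uIcc (hDc.continuousOn) h0m
    have : G s y = G s x := by have := hs0; simp [hD] at this; linarith
    exact (ne_of_gt hxy) (h.inj s this)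

theorem surj (h : IsFlowOf V G K) (t : ℝ) : Function.Surjective (fun x => G t x) := by
  intro y
  refine ⟨G (-t) y, ?_⟩
  show G t (G (-t) y) = y
  rw [← h.add]
  simp [h.zero]

theorem cont_space (h : IsFlowOf V G K) (t : ℝ) : Continuous (fun x => G t x) := by
  have := (StrictMono.orderIsoOfSurjective _ (h.strictMono t) (h.surj t)).continuous
  rwa [StrictMono.coe_orderIsoOfSurjective] at this

theorem contDiffAt_pos (h : IsFlowOf V G K) {x₀ : ℝ} (hx : 0 < V x₀) (t : ℝ) :
    ContDiffAt ℝ 1 (fun x => G t x) x₀ := by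
  set φ : ℝ → ℝ := fun s => G s x₀ with hφdef
  have hφd : ∀ s, HasDerivAt φ (V (φ s)) s := fun s => h.ode x₀ s
  have hφc : Continuous φ := h.cont_traj x₀
  have hφ0 : φ 0 = x₀ := h.zero x₀
  have hVφ : ∀ s, V (φ s) ≠ 0 := by
    intro s hVs
    have h1 : G (-s) (φ s) = φ s := h.fixed hVs (-s)
    have h2 : G (-s) (G s x₀) = x₀ := by rw [← h.add]; simp [h.zero]
    have : x₀ = φ s := by rw [← h2]; exact h1
    rw [← this] at hVs; exact (ne_of_gt hx) hVs
  have hpos : ∀ s, 0 < V (φ s) := by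
    intro s
    rcases (hVφ s).lt_or_gt with hneg | hpos
    · exfalso
      have h0m : (0:ℝ) ∈ uIcc (V (φ 0)) (V (φ s)) := by
        rw [Set.mem_uIcc]; right
        constructor
        · linarith
        · rw [hφ0]; linarith
      obtain ⟨r, _, hr0⟩ := intermediate_value_uIcc
        ((h.cont.comp hφc).continuousOn) h0m
      exact hVφ r hr0
    · exact hpos
  have hmono : StrictMono φ :=
    strictMono_of_deriv_pos (fun s => by rw [(hφd s).deriv]; exact hpos s)
  set U : Set ℝ := Ioo (φ (-2)) (φ 2) with hUdef
  have hU : x₀ ∈ U := by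
    constructor
    · rw [← hφ0]; exact hmono (by norm_num)
    · rw [← hφ0]; exact hmono (by norm_num)
  have hUim : ∀ y ∈ U, ∃ s ∈ Ioo (-2:ℝ) 2, φ s = y := by
    intro y hy
    have := intermediate_value_Ioo (by norm_num : (-2:ℝ) ≤ 2) hφc.continuousOn
    obtain ⟨s, hs, hsy⟩ := this hy
    exact ⟨s, hs, hsy⟩
  have hVU : ∀ y ∈ U, V y ≠ 0 := by
    intro y hy
    obtain ⟨s, _, rfl⟩ := hUim y hy
    exact hVφ s
  set θ : ℝ → ℝ := fun y => ∫ z in x₀..y, (V z)⁻¹ with hθdef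
  have hinvcontOn : ContinuousOn (fun z => (V z)⁻¹) U :=
    ContinuousOn.inv₀ h.cont.continuousOn hVU
  have hθd : ∀ y ∈ U, HasDerivAt θ (V y)⁻¹ y := by
    intro y hy
    have hsub : uIcc x₀ y ⊆ U := (Set.ordConnected_Ioo).uIcc_subset hU hy
    exact intervalIntegral.integral_hasDerivAt_right
      ((hinvcontOn.mono hsub).intervalIntegrable)
      ((h.cont.measurable.inv).stronglyMeasurable.stronglyMeasurableAtFilter)
      (hinvcontOn.continuousAt (isOpen_Ioo.mem_nhds hy))
  have hφmem : ∀ s ∈ Ioo (-2:ℝ) 2, φ s ∈ U := by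
    intro s hs
    exact ⟨hmono hs.1, hmono hs.2⟩
  have hq : ∀ s ∈ Ioo (-2:ℝ) 2, HasDerivAt (fun r => θ (φ r) - r) 0 s := by
    intro s hs
    have h1 := (hθd (φ s) (hφmem s hs)).comp s (hφd s)
    have h2 := h1.sub (hasDerivAt_id s)
    have : (V (φ s))⁻¹ * V (φ s) - 1 = 0 := by
      rw [inv_mul_cancel₀ (hVφ s)]; ring
    rwa [this] at h2
  have hθ0 : θ x₀ = 0 := intervalIntegral.integral_same
  have hqs : ∀ s ∈ Ioo (-2:ℝ) 2, θ (φ s) = s := by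
    intro s hs
    rcases eq_or_ne s 0 with rfl | hs0
    · rw [hφ0, hθ0]
    set a : ℝ := min s 0
    set b : ℝ := max s 0
    have hab : a < b := by
      rcases hs0.lt_or_gt with hlt | hgt
      · simp only [a, b]; rw [min_eq_left hlt.le, max_eq_right hlt.le]; exact hlt
      · simp only [a, b]; rw [min_eq_right hgt.le, max_eq_left hgt.le]; exact hgt
    have hsubI : Icc a b ⊆ Ioo (-2:ℝ) 2 := by
      intro r hr
      constructor
      · have : -2 < a := lt_min hs.1 (by norm_num)
        linarith [hr.1]
      · have : b < 2 := max_lt hs.2 (by norm_num)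
        linarith [hr.2]
    have hconst := constant_of_derivWithin_zero (f := fun r => θ (φ r) - r) (a := a) (b := b)
      (fun r hr => ((hq r (hsubI hr)).differentiableAt).differentiableWithinAt)
      (fun r hr => ((hq r (hsubI (Ico_subset_Icc_self hr))).hasDerivWithinAt).derivWithin
        (uniqueDiffOn_Icc hab r (Ico_subset_Icc_self hr)))
    have hsmem : s ∈ Icc a b := ⟨min_le_left _ _, le_max_left _ _⟩
    have h0mem : (0:ℝ) ∈ Icc a b := ⟨min_le_right _ _, le_max_right _ _⟩
    have h1 := hconst s hsmem
    have h2 := hconst 0 h0mem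
    have h3 : θ (φ s) - s = θ (φ a) - a := h1
    have h4 : θ (φ 0) - 0 = θ (φ a) - a := h2
    rw [hφ0, hθ0] at h4
    have h5 := h3.trans h4.symm
    linarith
  have hform : ∀ y ∈ U, G t y = φ (t + θ y) := by
    intro y hy
    obtain ⟨s, hs, rfl⟩ := hUim y hy
    rw [hqs s hs]
    show G t (G s x₀) = G (t + s) x₀
    rw [h.add]
  have hθC : ContDiffOn ℝ 1 θ U := by
    rw [show (1 : WithTop ℕ∞) = 0 + 1 from rfl,
      contDiffOn_succ_iff_deriv_of_isOpen isOpen_Ioo]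
    refine ⟨fun y hy => ((hθd y hy).differentiableAt).differentiableWithinAt, ?_, ?_⟩
    · intro hω; exact absurd hω (by norm_num)
    · rw [contDiffOn_zero]
      exact hinvcontOn.congr (fun y hy => (hθd y hy).deriv)
  have hφC : ContDiff ℝ 1 φ := by
    rw [contDiff_one_iff_deriv]
    refine ⟨fun s => (hφd s).differentiableAt, ?_⟩
    have : deriv φ = fun s => V (φ s) := funext fun s => (hφd s).deriv
    rw [this]
    exact h.cont.comp hφc
  have hcomp : ContDiffAt ℝ 1 (fun y => φ (t + θ y)) x₀ :=
    (hφC.contDiffAt).comp x₀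
      (ContDiffAt.add contDiffAt_const (hθC.contDiffAt (isOpen_Ioo.mem_nhds hU)))
  refine hcomp.congr_of_eventuallyEq ?_
  exact eventually_of_mem (isOpen_Ioo.mem_nhds hU) hform

theorem contDiffAt (h : IsFlowOf V G K) {x₀ : ℝ} (hx : V x₀ ≠ 0) (t : ℝ) :
    ContDiffAt ℝ 1 (fun x => G t x) x₀ := by
  rcases hx.lt_or_gt with hneg | hpos
  · have := h.neg.contDiffAt_pos (x₀ := x₀) (by simpa using hneg) (-t)
    simpa using this
  · exact h.contDiffAt_pos hpos t

end IsFlowOf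

end AuxFlow

section AuxBase

theorem Base.exists_flow (B : Base) (i : Fin 2) :
    ∃ K : NNReal, IsFlowOf (B.V i) (B.G i) K := by
  have hC1 : ContDiff ℝ 1 (B.V i) := (B.V_smooth i).of_le (by norm_num)
  have hdiff : Differentiable ℝ (B.V i) := hC1.differentiable (by norm_num)
  have hdc : Continuous (deriv (B.V i)) := (contDiff_one_iff_deriv.mp hC1).2
  have hper : ∀ x : ℝ, deriv (B.V i) (x + 1) = deriv (B.V i) x := by
    intro x
    have hfun : (fun y => B.V i (y + 1)) = B.V i := funext fun y => B.V_periodic i y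
    calc deriv (B.V i) (x + 1) = deriv (fun y => B.V i (y + 1)) x := by
          rw [deriv_comp_add_const]
      _ = deriv (B.V i) x := by rw [hfun]
  have hperi : Function.Periodic (deriv (B.V i)) 1 := hper
  obtain ⟨M, hM⟩ := (isCompact_Icc (a := (0:ℝ)) (b := 1)).exists_bound_of_continuousOn
    hdc.continuousOn
  have hbound : ∀ x : ℝ, ‖deriv (B.V i) x‖ ≤ max M 0 := by
    intro x
    have h1 : deriv (B.V i) (x - (⌊x⌋ : ℝ) * 1) = deriv (B.V i) x :=
      hperi.sub_int_mul_eq ⌊x⌋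
    have h2 : x - (⌊x⌋ : ℝ) * 1 = Int.fract x := by rw [mul_one, Int.fract]
    have h3 : Int.fract x ∈ Icc (0:ℝ) 1 :=
      ⟨Int.fract_nonneg x, (Int.fract_lt_one x).le⟩
    calc ‖deriv (B.V i) x‖ = ‖deriv (B.V i) (Int.fract x)‖ := by rw [← h1, h2]
      _ ≤ M := hM _ h3
      _ ≤ max M 0 := le_max_left _ _
  refine ⟨⟨max M 0, le_max_right _ _⟩, ?_, (B.V_smooth i).continuous,
    B.G_zero i, B.G_add i, B.G_ode i⟩
  exact lipschitzWith_of_nnnorm_deriv_le hdiff fun x => by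
    exact NNReal.coe_le_coe.mp (hbound x)

theorem Base.G_nat (B : Base) (i : Fin 2) (t x : ℝ) (k : ℕ) :
    B.G i t (x + k) = B.G i t x + k := by
  induction k with
  | zero => simp
  | succ m ih =>
    have h1 := B.G_periodic i t (x + m)
    push_cast
    rw [show x + ((m:ℝ) + 1) = x + (m:ℝ) + 1 by ring, h1, ih]
    push_cast
    ring

theorem Base.G_int (B : Base) (i : Fin 2) (t x : ℝ) (k : ℤ) :
    B.G i t (x + k) = B.G i t x + k := by
  rcases k.eq_nat_or_neg with ⟨n, rfl | rfl⟩
  · push_cast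
    exact B.G_nat i t x n
  · have h := B.G_nat i t (x - n) n
    rw [sub_add_cancel] at h
    push_cast
    rw [show x + -(n:ℝ) = x - n by ring]
    linarith [h]

theorem Base.lift_gT (B : Base) (i : Fin 2) (t : ℝ) {x : ℝ} {z : Circ}
    (hz : coeT x = z) : B.gT i t z = coeT (B.G i t x) := by
  subst hz
  show coeT (B.G i t (rep (coeT x))) = coeT (B.G i t x)
  rw [rep_coeT]
  have hx : x = Int.fract x + (⌊x⌋ : ℤ) := by rw [Int.fract]; push_cast; ring
  calc coeT (B.G i t (Int.fract x))
      = coeT (B.G i t (Int.fract x) + (⌊x⌋ : ℤ)) := (coeT_add_int _ _).symm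
    _ = coeT (B.G i t (Int.fract x + (⌊x⌋ : ℤ))) := by rw [B.G_int]
    _ = coeT (B.G i t x) := by rw [← hx]

theorem Base.V_ne_zero_of_free (B : Base) (i : Fin 2) {x : ℝ}
    (h : ¬ ∃ m : ℤ, x = m ∨ x = m + 1/2) : B.V i x ≠ 0 :=
  fun h0 => h ((B.V_zero_iff i x).mp h0)

end AuxBase

section AuxSetting

theorem Setting.psiI_zero (S : Setting) (n : ℕ) (u : ℝ) :
    S.psiI n 0 u = (S.psi n u).1 := if_pos rfl

theorem Setting.psiI_one (S : Setting) (n : ℕ) (u : ℝ) :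
    S.psiI n 1 u = (S.psi n u).2 := if_neg (by decide)

theorem Setting.zetaI_eq (S : Setting) (n : ℕ) (i : Fin 2) (u : ℝ) :
    S.zetaI n i u = S.toBase.gT i (S.toBase.tauT (S.psi n u)) (S.psiI n i u) := by
  fin_cases i
  · show S.zetaI n 0 u
      = S.toBase.gT 0 (S.toBase.tauT (S.psi n u)) (S.psiI n 0 u)
    rw [Setting.psiI_zero, Setting.zetaI, if_pos rfl]
    rfl
  · show S.zetaI n 1 u
      = S.toBase.gT 1 (S.toBase.tauT (S.psi n u)) (S.psiI n 1 u)
    rw [Setting.psiI_one, Setting.zetaI, if_neg (by decide)]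
    rfl

theorem cnt_eq {z : Circ × Circ} {x₁ x₂ : ℝ}
    (h1 : coeT x₁ = z.1) (h2 : coeT x₂ = z.2) : cnt z = Icnt x₁ + Icnt x₂ := by
  rw [cnt, ← h1, ← h2, rep_coeT, rep_coeT, Icnt, Icnt]

/-- The tau value as a function of the count. -/
theorem tauT_eq (B : Base) {z : Circ × Circ} {k : ℕ} (hk : cnt z = k) :
    B.tauT z = (1 - B.b) * (1 - B.Phi k)⁻¹ := by
  rw [Base.tauT, hk]

/-- Generic builder of `IsC1At` for `ζ` from a `C¹` lift of `ψ`, in a region where `τ`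
is constant and `ψ` avoids the poles. -/
theorem build_IsC1At {B : Base} {i : Fin 2} {K : NNReal}
    (hflow : IsFlowOf (B.V i) (B.G i) K) (t : ℝ) {g f : ℝ → Circ} {v δ : ℝ}
    (hδ : 0 < δ) (hf : IsC1At f v)
    (hfree : ∀ u ∈ Ioo (v - δ) (v + δ), ∀ x : ℝ, coeT x = f u → B.V i x ≠ 0)
    (hg : ∀ u ∈ Ioo (v - δ) (v + δ), g u = B.gT i t (f u)) : IsC1At g v := by
  obtain ⟨Fc, εc, hεc, hliftc, hdiffc⟩ := hf
  set ε' : ℝ := min δ εc with hε'def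
  have hε' : 0 < ε' := lt_min hδ hεc
  have hsubδ : Ioo (v - ε') (v + ε') ⊆ Ioo (v - δ) (v + δ) := by
    intro u hu
    have h1 := min_le_left δ εc
    exact ⟨by rcases hu with ⟨a, b⟩; linarith, by rcases hu with ⟨a, b⟩; linarith⟩
  have hsubε : Ioo (v - ε') (v + ε') ⊆ Ioo (v - εc) (v + εc) := by
    intro u hu
    have h1 := min_le_right δ εc
    exact ⟨by rcases hu with ⟨a, b⟩; linarith, by rcases hu with ⟨a, b⟩; linarith⟩
  refine ⟨fun u => B.G i t (Fc u), ε', hε', ?_, ?_⟩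
  · intro u hu
    rw [hg u (hsubδ hu), B.lift_gT i t (hliftc u (hsubε hu))]
  · intro u hu
    have hfu : B.V i (Fc u) ≠ 0 :=
      hfree u (hsubδ hu) (Fc u) (hliftc u (hsubε hu))
    exact (hflow.contDiffAt hfu t).comp_contDiffWithinAt u
      ((hdiffc.mono hsubε) u hu)

/-- The per-component local analysis of a monotone lift around `ū`. -/
theorem side_analysis {F : ℝ → ℝ} {ub ε₀ : ℝ} (hε₀ : 0 < ε₀)
    (hcont : ContinuousOn F (Ioo (ub - ε₀) (ub + ε₀)))
    (hmono : MonotoneOn F (Ioo (ub - ε₀) (ub + ε₀))) :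
    ∃ ε : ℝ, 0 < ε ∧ ε ≤ ε₀ ∧ ∃ aL aR : ℕ,
      (∀ u ∈ Ioo (ub - ε) ub, Icnt (F u) = aL) ∧
      (∀ u ∈ Ioo ub (ub + ε), Icnt (F u) = aR) ∧
      ((¬ ∃ m : ℤ, F ub = m ∨ F ub = m + 1/2) →
        aL = Icnt (F ub) ∧ aR = Icnt (F ub) ∧
        ∀ u ∈ Ioo (ub - ε) (ub + ε), ¬ ∃ m : ℤ, F u = m ∨ F u = m + 1/2) ∧
      ((∃ m : ℤ, F ub = m ∨ F ub = m + 1/2) →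
        ((∀ u ∈ Ioo (ub - ε) ub, F u = F ub) ∨
          (∀ u ∈ Ioo (ub - ε) ub, F u < F ub ∧ F ub - 1/4 < F u)) ∧
        ((∀ u ∈ Ioo ub (ub + ε), F u = F ub) ∨
          (∀ u ∈ Ioo ub (ub + ε), F ub < F u ∧ F u < F ub + 1/4))) := by
  have hub : ub ∈ Ioo (ub - ε₀) (ub + ε₀) := ⟨by linarith, by linarith⟩
  have hca : ContinuousAt F ub := hcont.continuousAt (isOpen_Ioo.mem_nhds hub)
  have hcd : ∀ δ : ℝ, 0 < δ → ∃ ε : ℝ, 0 < ε ∧ ε ≤ ε₀ ∧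
      ∀ u ∈ Ioo (ub - ε) (ub + ε), |F u - F ub| < δ := by
    intro δ hδ
    obtain ⟨ε', hε', hball⟩ := Metric.continuousAt_iff.mp hca δ hδ
    refine ⟨min ε₀ ε', lt_min hε₀ hε', min_le_left _ _, fun u hu => ?_⟩
    have hmin := min_le_right ε₀ ε'
    have hdist : dist u ub < ε' := by
      rw [Real.dist_eq, abs_lt]
      exact ⟨by rcases hu with ⟨a, b⟩; linarith, by rcases hu with ⟨a, b⟩; linarith⟩
    have := hball hdist
    rwa [Real.dist_eq] at this
  by_cases hpole : ∃ m : ℤ, F ub = m ∨ F ub = m + 1/2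
  · -- pole case
    obtain ⟨ε₁, hε₁, hε₁le, hquarter⟩ := hcd (1/4) (by norm_num)
    have hsub₁ : Ioo (ub - ε₁) (ub + ε₁) ⊆ Ioo (ub - ε₀) (ub + ε₀) := fun u hu =>
      ⟨by rcases hu with ⟨a, b⟩; linarith, by rcases hu with ⟨a, b⟩; linarith⟩
    -- left dichotomy
    have hleft : ∃ εL : ℝ, 0 < εL ∧ εL ≤ ε₁ ∧
        ((∀ u ∈ Ioo (ub - εL) ub, F u = F ub) ∨
         (∀ u ∈ Ioo (ub - εL) ub, F u < F ub ∧ F ub - 1/4 < F u)) := by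
      by_cases hL : ∃ u', u' ∈ Ioo (ub - ε₁) ub ∧ F u' = F ub
      · obtain ⟨u', hu', hFu'⟩ := hL
        obtain ⟨hu'1, hu'2⟩ := hu'
        refine ⟨ub - u', by linarith, by linarith, Or.inl ?_⟩
        intro u hu
        obtain ⟨hu1, hu2⟩ := hu
        have hum : u ∈ Ioo (ub - ε₀) (ub + ε₀) := ⟨by linarith, by linarith⟩
        have hu'm : u' ∈ Ioo (ub - ε₀) (ub + ε₀) := ⟨by linarith, by linarith⟩
        have h1 : F u' ≤ F u := hmono hu'm hum (by linarith)
        have h2 : F u ≤ F ub := hmono hum hub (by linarith)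
        rw [hFu'] at h1
        linarith
      · refine ⟨ε₁, hε₁, le_refl _, Or.inr ?_⟩
        intro u hu
        have hum : u ∈ Ioo (ub - ε₀) (ub + ε₀) := by
          rcases hu with ⟨a, b⟩; constructor <;> linarith
        have h2 : F u ≤ F ub := hmono hum hub (by rcases hu with ⟨a, b⟩; linarith)
        have h3 : F u ≠ F ub := fun hc => hL ⟨u, ⟨hu.1, hu.2⟩, hc⟩
        have h4 := hquarter u ⟨hu.1, by rcases hu with ⟨a, b⟩; linarith⟩
        rw [abs_lt] at h4
        exact ⟨lt_of_le_of_ne h2 h3, by linarith [h4.1]⟩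
    have hright : ∃ εR : ℝ, 0 < εR ∧ εR ≤ ε₁ ∧
        ((∀ u ∈ Ioo ub (ub + εR), F u = F ub) ∨
         (∀ u ∈ Ioo ub (ub + εR), F ub < F u ∧ F u < F ub + 1/4)) := by
      by_cases hR : ∃ u', u' ∈ Ioo ub (ub + ε₁) ∧ F u' = F ub
      · obtain ⟨u', hu', hFu'⟩ := hR
        obtain ⟨hu'1, hu'2⟩ := hu'
        refine ⟨u' - ub, by linarith, by linarith, Or.inl ?_⟩
        intro u hu
        obtain ⟨hu1, hu2⟩ := hu
        have hum : u ∈ Ioo (ub - ε₀) (ub + ε₀) := ⟨by linarith, by linarith⟩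
        have hu'm : u' ∈ Ioo (ub - ε₀) (ub + ε₀) := ⟨by linarith, by linarith⟩
        have h1 : F u ≤ F u' := hmono hum hu'm (by linarith)
        have h2 : F ub ≤ F u := hmono hub hum (by linarith)
        rw [hFu'] at h1
        linarith
      · refine ⟨ε₁, hε₁, le_refl _, Or.inr ?_⟩
        intro u hu
        have hum : u ∈ Ioo (ub - ε₀) (ub + ε₀) := by
          rcases hu with ⟨a, b⟩; constructor <;> linarith
        have h2 : F ub ≤ F u := hmono hub hum (by rcases hu with ⟨a, b⟩; linarith)
        have h3 : F u ≠ F ub := fun hc => hR ⟨u, ⟨hu.1, hu.2⟩, hc⟩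
        have h4 := hquarter u ⟨by rcases hu with ⟨a, b⟩; linarith, hu.2⟩
        rw [abs_lt] at h4
        exact ⟨lt_of_le_of_ne h2 (Ne.symm h3), by linarith [h4.2]⟩
    obtain ⟨εL, hεL, hεLle, hdL⟩ := hleft
    obtain ⟨εR, hεR, hεRle, hdR⟩ := hright
    set ε : ℝ := min εL εR with hεdef
    have hε : 0 < ε := lt_min hεL hεR
    have hεle : ε ≤ ε₀ := le_trans (le_trans (min_le_left _ _) hεLle) hε₁le
    have hsubL : Ioo (ub - ε) ub ⊆ Ioo (ub - εL) ub := fun u hu =>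
      ⟨by have := min_le_left εL εR; rcases hu with ⟨a, b⟩; linarith, hu.2⟩
    have hsubR : Ioo ub (ub + ε) ⊆ Ioo ub (ub + εR) := fun u hu =>
      ⟨hu.1, by have := min_le_right εL εR; rcases hu with ⟨a, b⟩; linarith⟩
    obtain ⟨m, hm⟩ := hpole
    -- the Icnt value on each side
    have haL : ∃ aL : ℕ, ∀ u ∈ Ioo (ub - ε) ub, Icnt (F u) = aL := by
      rcases hdL with hflat | hstrict
      · exact ⟨Icnt (F ub), fun u hu => by rw [hflat u (hsubL hu)]⟩
      · rcases hm with hm | hm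
        · refine ⟨1, fun u hu => ?_⟩
          obtain ⟨h1, h2⟩ := hstrict u (hsubL hu)
          exact Icnt_high (m := m - 1) (by push_cast; rw [hm] at h2; linarith)
            (by push_cast; rw [hm] at h1; linarith)
        · refine ⟨0, fun u hu => ?_⟩
          obtain ⟨h1, h2⟩ := hstrict u (hsubL hu)
          exact Icnt_low (m := m) (by rw [hm] at h2; linarith)
            (by rw [hm] at h1; linarith)
    have haR : ∃ aR : ℕ, ∀ u ∈ Ioo ub (ub + ε), Icnt (F u) = aR := by
      rcases hdR with hflat | hstrict
      · exact ⟨Icnt (F ub), fun u hu => by rw [hflat u (hsubR hu)]⟩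
      · rcases hm with hm | hm
        · refine ⟨0, fun u hu => ?_⟩
          obtain ⟨h1, h2⟩ := hstrict u (hsubR hu)
          exact Icnt_low (m := m) (by rw [hm] at h1; linarith)
            (by rw [hm] at h2; linarith)
        · refine ⟨1, fun u hu => ?_⟩
          obtain ⟨h1, h2⟩ := hstrict u (hsubR hu)
          exact Icnt_high (m := m) (by rw [hm] at h1; linarith)
            (by push_cast; rw [hm] at h2; linarith)
    obtain ⟨aL, haL⟩ := haL
    obtain ⟨aR, haR⟩ := haR
    refine ⟨ε, hε, hεle, aL, aR, haL, haR, fun hnp => absurd ⟨m, hm⟩ hnp, fun _ => ?_⟩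
    constructor
    · rcases hdL with hflat | hstrict
      · exact Or.inl (fun u hu => hflat u (hsubL hu))
      · exact Or.inr (fun u hu => hstrict u (hsubL hu))
    · rcases hdR with hflat | hstrict
      · exact Or.inl (fun u hu => hflat u (hsubR hu))
      · exact Or.inr (fun u hu => hstrict u (hsubR hu))
  · -- non-pole case
    set P : ℝ := F ub with hPdef
    set m : ℤ := ⌊P⌋ with hmdef
    have hfr0 : Int.fract P ≠ 0 := by
      intro hc
      refine hpole ⟨m, Or.inl ?_⟩
      rw [Int.fract] at hc
      rw [hmdef]
      linarith
    have hfrh : Int.fract P ≠ 1/2 := by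
      intro hc
      refine hpole ⟨m, Or.inr ?_⟩
      rw [Int.fract] at hc
      rw [hmdef]; linarith
    have hfrpos : 0 < Int.fract P := lt_of_le_of_ne (Int.fract_nonneg P) (Ne.symm hfr0)
    have hfrlt : Int.fract P < 1 := Int.fract_lt_one P
    have hPm : P = m + Int.fract P := by rw [hmdef, Int.fract]; ring
    rcases lt_or_gt_of_ne hfrh with hlow | hhigh
    · -- fract P ∈ (0, 1/2)
      obtain ⟨ε, hε, hεle, hball⟩ := hcd (min (Int.fract P) (1/2 - Int.fract P))
        (lt_min hfrpos (by linarith))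
      have hloc : ∀ u ∈ Ioo (ub - ε) (ub + ε), (m:ℝ) < F u ∧ F u < m + 1/2 := by
        intro u hu
        have h1 := hball u hu
        rw [abs_lt] at h1
        have h2 := min_le_left (Int.fract P) (1/2 - Int.fract P)
        have h3 := min_le_right (Int.fract P) (1/2 - Int.fract P)
        constructor
        · nlinarith [h1.1, hPm]
        · nlinarith [h1.2, hPm]
      have hIc : ∀ u ∈ Ioo (ub - ε) (ub + ε), Icnt (F u) = 0 := fun u hu =>
        Icnt_low (m := m) (hloc u hu).1.le (hloc u hu).2.le
      have hIub : Icnt P = 0 := Icnt_low (m := m) (by rw [hPm]; linarith)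
        (by rw [hPm]; linarith)
      refine ⟨ε, hε, hεle, 0, 0,
        fun u hu => hIc u ⟨hu.1, by rcases hu with ⟨a, b⟩; linarith⟩,
        fun u hu => hIc u ⟨by rcases hu with ⟨a, b⟩; linarith, hu.2⟩,
        fun _ => ⟨hIub.symm, hIub.symm, ?_⟩,
        fun hp => absurd hp hpole⟩
      intro u hu
      exact no_half_int_lowmid (hloc u hu).1 (hloc u hu).2
    · -- fract P ∈ (1/2, 1)
      obtain ⟨ε, hε, hεle, hball⟩ := hcd (min (Int.fract P - 1/2) (1 - Int.fract P))
        (lt_min (by linarith) (by linarith))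
      have hloc : ∀ u ∈ Ioo (ub - ε) (ub + ε), (m:ℝ) + 1/2 < F u ∧ F u < m + 1 := by
        intro u hu
        have h1 := hball u hu
        rw [abs_lt] at h1
        have h2 := min_le_left (Int.fract P - 1/2) (1 - Int.fract P)
        have h3 := min_le_right (Int.fract P - 1/2) (1 - Int.fract P)
        constructor
        · nlinarith [h1.1, hPm]
        · nlinarith [h1.2, hPm]
      have hIc : ∀ u ∈ Ioo (ub - ε) (ub + ε), Icnt (F u) = 1 := fun u hu =>
        Icnt_high (m := m) (hloc u hu).1 (hloc u hu).2
      have hIub : Icnt P = 1 := Icnt_high (m := m) (by rw [hPm]; linarith)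
        (by rw [hPm]; linarith)
      refine ⟨ε, hε, hεle, 1, 1,
        fun u hu => hIc u ⟨hu.1, by rcases hu with ⟨a, b⟩; linarith⟩,
        fun u hu => hIc u ⟨by rcases hu with ⟨a, b⟩; linarith, hu.2⟩,
        fun _ => ⟨hIub.symm, hIub.symm, ?_⟩,
        fun hp => absurd hp hpole⟩
      intro u hu
      exact no_half_int_highmid (hloc u hu).1 (hloc u hu).2

end AuxSetting

/- STATEMENT 12 (Lemma 4.1(ii)-(iii)): suppose at `ū ∈ (0, e^{λn} a)` both `ψ_n^1, ψ_n^2`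
   are continuous and monotonically increasing near `ū` and `C¹` near `ū` except possibly
   at `ū`. (ii) If `ψ_n^i(ū) ∉ {0, 1/2}` for `i = 1,2`, then each `ζ_n^i` is continuous
   and monotonically increasing near `ū`, `C¹` near `ū` except possibly at `ū` (and `C¹`
   at `ū` whenever both `ψ_n^i` are). (iii) If `ψ_n^i(ū) ∈ {0, 1/2}`, then `ζ_n^i` is
   continuous and monotonically increasing near `ū` and `C¹` there except possibly at `ū`
   (this holds for i = 1 and for i = 2, i.e. with the indices interchanged). -/
theorem stmt_12 (S : Setting) (n : ℕ) (ubar : ℝ)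
    (hu : ubar ∈ Ioo (0:ℝ) (S.len n))
    (hmono : ∀ i : Fin 2, ContMonoNear (S.psiI n i) ubar)
    (hC1 : ∀ i : Fin 2, C1StarNear (S.psiI n i) ubar) :
    ((∀ i : Fin 2, S.psiI n i ubar ≠ coeT 0 ∧ S.psiI n i ubar ≠ coeT (1/2)) →
      ∀ i : Fin 2, ContMonoNear (S.zetaI n i) ubar ∧ C1StarNear (S.zetaI n i) ubar ∧
        ((∀ j : Fin 2, IsC1At (S.psiI n j) ubar) → IsC1At (S.zetaI n i) ubar)) ∧
    (∀ i : Fin 2, (S.psiI n i ubar = coeT 0 ∨ S.psiI n i ubar = coeT (1/2)) →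
      ContMonoNear (S.zetaI n i) ubar ∧ C1StarNear (S.zetaI n i) ubar) := by
  classical
  choose Kf flowf using S.toBase.exists_flow
  choose F εm hεm hliftm hcontm hmonom using hmono
  choose εc hεcpos hC1' using hC1
  set ε₀ : ℝ := min (min (εm 0) (εm 1)) (min (εc 0) (εc 1)) with hε₀def
  have hε₀ : 0 < ε₀ := lt_min (lt_min (hεm 0) (hεm 1)) (lt_min (hεcpos 0) (hεcpos 1))
  have hε₀m : ∀ i : Fin 2, ε₀ ≤ εm i := by
    intro i
    fin_cases i
    · exact le_trans (min_le_left _ _) (min_le_left _ _)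
    · exact le_trans (min_le_left _ _) (min_le_right _ _)
  have hε₀c : ∀ i : Fin 2, ε₀ ≤ εc i := by
    intro i
    fin_cases i
    · exact le_trans (min_le_right _ _) (min_le_left _ _)
    · exact le_trans (min_le_right _ _) (min_le_right _ _)
  have hsubm : ∀ i : Fin 2,
      Ioo (ubar - ε₀) (ubar + ε₀) ⊆ Ioo (ubar - εm i) (ubar + εm i) := by
    intro i u hu'
    obtain ⟨a, b⟩ := hu'
    have := hε₀m i
    exact ⟨by linarith, by linarith⟩
  have hlift : ∀ (i : Fin 2), ∀ u ∈ Ioo (ubar - ε₀) (ubar + ε₀),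
      coeT (F i u) = S.psiI n i u := fun i u hu' => hliftm i u (hsubm i hu')
  have hcontF : ∀ i : Fin 2, ContinuousOn (F i) (Ioo (ubar - ε₀) (ubar + ε₀)) :=
    fun i => (hcontm i).mono (hsubm i)
  have hmonoF : ∀ i : Fin 2, MonotoneOn (F i) (Ioo (ubar - ε₀) (ubar + ε₀)) :=
    fun i => (hmonom i).mono (hsubm i)
  have hSA := fun i : Fin 2 =>
    side_analysis (F := F i) (ub := ubar) hε₀ (hcontF i) (hmonoF i)
  choose ε₁f hε₁pos hε₁le aL aR hL hR hNP hPd using hSA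
  set ε₁ : ℝ := min (ε₁f 0) (ε₁f 1) with hε₁def
  have hε₁ : 0 < ε₁ := lt_min (hε₁pos 0) (hε₁pos 1)
  have hε₁f : ∀ i : Fin 2, ε₁ ≤ ε₁f i := by
    intro i
    fin_cases i
    · exact min_le_left _ _
    · exact min_le_right _ _
  have hε₁ε₀ : ε₁ ≤ ε₀ := le_trans (min_le_left _ _) (hε₁le 0)
  have hubar₀ : ubar ∈ Ioo (ubar - ε₀) (ubar + ε₀) := ⟨by linarith, by linarith⟩
  have hmem₀ : ∀ u ∈ Ioo (ubar - ε₁) (ubar + ε₁), u ∈ Ioo (ubar - ε₀) (ubar + ε₀) := by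
    intro u hu'
    obtain ⟨a, b⟩ := hu'
    exact ⟨by linarith, by linarith⟩
  have hpoleiff : ∀ i : Fin 2,
      (S.psiI n i ubar = coeT 0 ∨ S.psiI n i ubar = coeT (1/2)) ↔
        ∃ m : ℤ, F i ubar = m ∨ F i ubar = m + 1/2 := by
    intro i
    rw [← hlift i ubar hubar₀]
    exact half_int_iff
  have hcnt : ∀ u ∈ Ioo (ubar - ε₀) (ubar + ε₀),
      cnt (S.psi n u) = Icnt (F 0 u) + Icnt (F 1 u) := by
    intro u hu'
    exact cnt_eq ((hlift 0 u hu').trans (S.psiI_zero n u))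
      ((hlift 1 u hu').trans (S.psiI_one n u))
  set τL : ℝ := (1 - S.toBase.b) * (1 - S.toBase.Phi (aL 0 + aL 1))⁻¹ with hτLdef
  set τR : ℝ := (1 - S.toBase.b) * (1 - S.toBase.Phi (aR 0 + aR 1))⁻¹ with hτRdef
  have hτL : ∀ u ∈ Ioo (ubar - ε₁) ubar, S.toBase.tauT (S.psi n u) = τL := by
    intro u hu'
    obtain ⟨hu1, hu2⟩ := hu'
    have hum : u ∈ Ioo (ubar - ε₀) (ubar + ε₀) := ⟨by linarith, by linarith⟩
    refine tauT_eq _ ?_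
    rw [hcnt u hum, hL 0 u ⟨by linarith [hε₁f 0], hu2⟩,
      hL 1 u ⟨by linarith [hε₁f 1], hu2⟩]
  have hτR : ∀ u ∈ Ioo ubar (ubar + ε₁), S.toBase.tauT (S.psi n u) = τR := by
    intro u hu'
    obtain ⟨hu1, hu2⟩ := hu'
    have hum : u ∈ Ioo (ubar - ε₀) (ubar + ε₀) := ⟨by linarith, by linarith⟩
    refine tauT_eq _ ?_
    rw [hcnt u hum, hR 0 u ⟨hu1, by linarith [hε₁f 0]⟩,
      hR 1 u ⟨hu1, by linarith [hε₁f 1]⟩]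
  have hzeta : ∀ (i : Fin 2) (t : ℝ), ∀ u ∈ Ioo (ubar - ε₀) (ubar + ε₀),
      S.toBase.tauT (S.psi n u) = t →
      S.zetaI n i u = coeT (S.toBase.G i t (F i u)) := by
    intro i t u hu' ht
    rw [S.zetaI_eq n i u, ht, S.toBase.lift_gT i t (hlift i u hu')]
  constructor
  · -- Part (ii)
    intro hnp i
    have hnpF : ∀ j : Fin 2, ¬ ∃ m : ℤ, F j ubar = m ∨ F j ubar = m + 1/2 := by
      intro j hc
      rcases (hpoleiff j).mpr hc with h | h
      · exact (hnp j).1 h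
      · exact (hnp j).2 h
    have hNP0 := hNP 0 (hnpF 0)
    have hNP1 := hNP 1 (hnpF 1)
    have hNPi := hNP i (hnpF i)
    have hτconst : ∀ u ∈ Ioo (ubar - ε₁) (ubar + ε₁),
        S.toBase.tauT (S.psi n u) = τL := by
      intro u hu'
      obtain ⟨hu1, hu2⟩ := hu'
      rcases lt_trichotomy u ubar with hlt | rfl | hgt
      · exact hτL u ⟨hu1, hlt⟩
      · refine tauT_eq _ ?_
        rw [hcnt u hubar₀, hNP0.1, hNP1.1]
      · have h1 := hτR u ⟨hgt, hu2⟩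
        have h2 : aL 0 + aL 1 = aR 0 + aR 1 := by
          rw [hNP0.1, hNP0.2.1, hNP1.1, hNP1.2.1]
        rw [h1, hτRdef, hτLdef, h2]
    -- the C¹ builder for any point of the interval
    have hbuild : ∀ v ∈ Ioo (ubar - ε₁) (ubar + ε₁),
        IsC1At (S.psiI n i) v → IsC1At (S.zetaI n i) v := by
      intro v hv hvC1
      obtain ⟨hv1, hv2⟩ := hv
      set δ : ℝ := min (v - (ubar - ε₁)) ((ubar + ε₁) - v) with hδdef
      have hδ : 0 < δ := lt_min (by linarith) (by linarith)
      have hsubδ : Ioo (v - δ) (v + δ) ⊆ Ioo (ubar - ε₁) (ubar + ε₁) := by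
        intro u hu'
        obtain ⟨a, b⟩ := hu'
        have h1 := min_le_left (v - (ubar - ε₁)) ((ubar + ε₁) - v)
        have h2 := min_le_right (v - (ubar - ε₁)) ((ubar + ε₁) - v)
        exact ⟨by linarith, by linarith⟩
      refine build_IsC1At (flowf i) τL hδ hvC1 ?_ ?_
      · intro u hu' x hx
        have hu₁ := hsubδ hu'
        apply S.toBase.V_ne_zero_of_free
        refine free_shift ?_ (hx.trans (hlift i u (hmem₀ u hu₁)).symm)
        refine hNPi.2.2 u ?_
        obtain ⟨a, b⟩ := hu₁
        exact ⟨by linarith [hε₁f i], by linarith [hε₁f i]⟩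
      · intro u hu'
        rw [S.zetaI_eq n i u, hτconst u (hsubδ hu')]
    refine ⟨?_, ?_, ?_⟩
    · -- ContMonoNear
      refine ⟨fun u => S.toBase.G i τL (F i u), ε₁, hε₁, ?_, ?_, ?_⟩
      · intro u hu'
        exact (hzeta i τL u (hmem₀ u hu') (hτconst u hu')).symm
      · exact ((flowf i).cont_space τL).comp_continuousOn
          ((hcontF i).mono hmem₀)
      · intro a ha b hb hab
        exact ((flowf i).strictMono τL).monotone
          ((hmonoF i) (hmem₀ a ha) (hmem₀ b hb) hab)
    · -- C1StarNear
      exact ⟨ε₁, hε₁, fun v hv hne => hbuild v hv (hC1' i v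
        ⟨by obtain ⟨a, b⟩ := hv; linarith [hε₀c i, hε₁ε₀],
         by obtain ⟨a, b⟩ := hv; linarith [hε₀c i, hε₁ε₀]⟩ hne)⟩
    · -- C¹ at ubar
      intro hC1ψ
      exact hbuild ubar ⟨by linarith, by linarith⟩ (hC1ψ i)
  · -- Part (iii)
    intro i hpole
    have hplF : ∃ m : ℤ, F i ubar = m ∨ F i ubar = m + 1/2 := (hpoleiff i).mp hpole
    have hVP : S.toBase.V i (F i ubar) = 0 := (S.toBase.V_zero_iff i _).mpr hplF
    have hGP : ∀ t, S.toBase.G i t (F i ubar) = F i ubar :=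
      fun t => (flowf i).fixed hVP t
    obtain ⟨hdL, hdR⟩ := hPd i hplF
    have hHdef : ∀ u : ℝ, (fun u => if u ≤ ubar then S.toBase.G i τL (F i u)
        else S.toBase.G i τR (F i u)) u
        = if u ≤ ubar then S.toBase.G i τL (F i u) else S.toBase.G i τR (F i u) :=
      fun _ => rfl
    constructor
    · -- ContMonoNear
      refine ⟨fun u => if u ≤ ubar then S.toBase.G i τL (F i u)
        else S.toBase.G i τR (F i u), ε₁, hε₁, ?_, ?_, ?_⟩
      · -- lift
        intro u hu'
        rw [hHdef u]
        rcases lt_trichotomy u ubar with hlt | rfl | hgt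
        · rw [if_pos hlt.le]
          exact (hzeta i τL u (hmem₀ u hu') (hτL u ⟨hu'.1, hlt⟩)).symm
        · rw [if_pos le_rfl, hGP τL, hzeta i _ u hubar₀ rfl, hGP]
        · rw [if_neg (not_le.mpr hgt)]
          exact (hzeta i τR u (hmem₀ u hu') (hτR u ⟨hgt, hu'.2⟩)).symm
      · -- ContinuousOn
        intro u₀ hu₀
        have hcFat : ∀ u ∈ Ioo (ubar - ε₁) (ubar + ε₁), ContinuousAt (F i) u :=
          fun u hu' => (hcontF i).continuousAt (isOpen_Ioo.mem_nhds (hmem₀ u hu'))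
        have hbaseL : ContinuousAt (fun u => S.toBase.G i τL (F i u)) u₀ :=
          (((flowf i).cont_space τL).continuousAt).comp (hcFat u₀ hu₀)
        have hbaseR : ContinuousAt (fun u => S.toBase.G i τR (F i u)) u₀ :=
          (((flowf i).cont_space τR).continuousAt).comp (hcFat u₀ hu₀)
        rcases lt_trichotomy u₀ ubar with hlt | heq | hgt
        · refine (hbaseL.congr ?_).continuousWithinAt
          exact eventually_of_mem (Iio_mem_nhds hlt)
            (fun u hu' => by rw [hHdef u, if_pos (le_of_lt hu')])
        · subst heq
          have hleft : ContinuousWithinAt (fun u => if u ≤ u₀ then S.toBase.G i τL (F i u)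
              else S.toBase.G i τR (F i u)) (Iic u₀) u₀ := by
            refine (hbaseL.continuousWithinAt).congr
              (fun y hy => if_pos hy) ?_
            exact if_pos le_rfl
          have hright : ContinuousWithinAt (fun u => if u ≤ u₀ then S.toBase.G i τL (F i u)
              else S.toBase.G i τR (F i u)) (Ioi u₀) u₀ := by
            refine (hbaseR.continuousWithinAt).congr
              (fun y hy => if_neg (not_le.mpr hy)) ?_
            rw [if_pos le_rfl, hGP, hGP]
          have huu := hleft.union hright
          rw [Iic_union_Ioi] at huu
          exact ((continuousWithinAt_univ _ _).mp huu).continuousWithinAt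
        · refine (hbaseR.congr ?_).continuousWithinAt
          exact eventually_of_mem (Ioi_mem_nhds hgt)
            (fun u hu' => by rw [hHdef u, if_neg (not_le.mpr hu')])
      · -- MonotoneOn
        intro a ha b hb hab
        by_cases hA : a ≤ ubar <;> by_cases hB : b ≤ ubar
        · simp only [if_pos hA, if_pos hB]
          exact ((flowf i).strictMono τL).monotone
            ((hmonoF i) (hmem₀ a ha) (hmem₀ b hb) hab)
        · simp only [if_pos hA, if_neg hB]
          push_neg at hB
          have h1 : F i a ≤ F i ubar := (hmonoF i) (hmem₀ a ha) hubar₀ hA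
          have h2 : F i ubar ≤ F i b := (hmonoF i) hubar₀ (hmem₀ b hb) hB.le
          calc S.toBase.G i τL (F i a) ≤ S.toBase.G i τL (F i ubar) :=
                ((flowf i).strictMono τL).monotone h1
            _ = F i ubar := hGP τL
            _ = S.toBase.G i τR (F i ubar) := (hGP τR).symm
            _ ≤ S.toBase.G i τR (F i b) := ((flowf i).strictMono τR).monotone h2
        · push_neg at hA
          exact absurd hab (by push_neg; exact lt_of_le_of_lt hB hA)
        · simp only [if_neg hA, if_neg hB]
          exact ((flowf i).strictMono τR).monotone
            ((hmonoF i) (hmem₀ a ha) (hmem₀ b hb) hab)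
    · -- C1StarNear
      refine ⟨ε₁, hε₁, fun v hv hne => ?_⟩
      obtain ⟨hv1, hv2⟩ := hv
      have hvC1 : IsC1At (S.psiI n i) v := hC1' i v
        ⟨by linarith [hε₀c i, hε₁ε₀], by linarith [hε₀c i, hε₁ε₀]⟩ hne
      rcases hne.lt_or_gt with hvlt | hvgt
      · -- v < ubar
        set δ' : ℝ := min (v - (ubar - ε₁)) (ubar - v) with hδ'def
        have hδ' : 0 < δ' := lt_min (by linarith) (by linarith)
        have hsubδ' : Ioo (v - δ') (v + δ') ⊆ Ioo (ubar - ε₁) ubar := by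
          intro u hu'
          obtain ⟨a, b⟩ := hu'
          have h1 := min_le_left (v - (ubar - ε₁)) (ubar - v)
          have h2 := min_le_right (v - (ubar - ε₁)) (ubar - v)
          exact ⟨by linarith, by linarith⟩
        have hmemf : ∀ u ∈ Ioo (v - δ') (v + δ'), u ∈ Ioo (ubar - ε₁f i) ubar := by
          intro u hu'
          obtain ⟨a, b⟩ := hsubδ' hu'
          exact ⟨by linarith [hε₁f i], b⟩
        rcases hdL with hflat | hstrict
        · -- flat side: ζ is locally constant
          refine ⟨fun _ => F i ubar, δ', hδ', ?_, contDiffOn_const⟩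
          intro u hu'
          have humem := hsubδ' hu'
          have hflatu : F i u = F i ubar := hflat u (hmemf u hu')
          have hum₀ : u ∈ Ioo (ubar - ε₀) (ubar + ε₀) :=
            hmem₀ u ⟨humem.1, by obtain ⟨a, b⟩ := humem; linarith⟩
          rw [hzeta i τL u hum₀ (hτL u humem), hflatu, hGP]
        · -- strict side
          refine build_IsC1At (flowf i) τL hδ' hvC1 ?_ ?_
          · intro u hu' x hx
            have hstrictu := hstrict u (hmemf u hu')
            have hum₀ : u ∈ Ioo (ubar - ε₀) (ubar + ε₀) := by
              obtain ⟨a, b⟩ := hsubδ' hu'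
              exact ⟨by linarith, by linarith⟩
            apply S.toBase.V_ne_zero_of_free
            exact free_shift (no_half_int_left' hplF hstrictu.2 hstrictu.1)
              (hx.trans (hlift i u hum₀).symm)
          · intro u hu'
            rw [S.zetaI_eq n i u, hτL u (hsubδ' hu')]
      · -- v > ubar
        set δ' : ℝ := min ((ubar + ε₁) - v) (v - ubar) with hδ'def
        have hδ' : 0 < δ' := lt_min (by linarith) (by linarith)
        have hsubδ' : Ioo (v - δ') (v + δ') ⊆ Ioo ubar (ubar + ε₁) := by
          intro u hu'
          obtain ⟨a, b⟩ := hu'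
          have h1 := min_le_left ((ubar + ε₁) - v) (v - ubar)
          have h2 := min_le_right ((ubar + ε₁) - v) (v - ubar)
          exact ⟨by linarith, by linarith⟩
        have hmemf : ∀ u ∈ Ioo (v - δ') (v + δ'), u ∈ Ioo ubar (ubar + ε₁f i) := by
          intro u hu'
          obtain ⟨a, b⟩ := hsubδ' hu'
          exact ⟨a, by linarith [hε₁f i]⟩
        rcases hdR with hflat | hstrict
        · refine ⟨fun _ => F i ubar, δ', hδ', ?_, contDiffOn_const⟩
          intro u hu'
          have humem := hsubδ' hu'
          have hflatu : F i u = F i ubar := hflat u (hmemf u hu')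
          have hum₀ : u ∈ Ioo (ubar - ε₀) (ubar + ε₀) :=
            hmem₀ u ⟨by obtain ⟨a, b⟩ := humem; linarith, humem.2⟩
          rw [hzeta i τR u hum₀ (hτR u humem), hflatu, hGP]
        · refine build_IsC1At (flowf i) τR hδ' hvC1 ?_ ?_
          · intro u hu' x hx
            have hstrictu := hstrict u (hmemf u hu')
            have hum₀ : u ∈ Ioo (ubar - ε₀) (ubar + ε₀) := by
              obtain ⟨a, b⟩ := hsubδ' hu'
              exact ⟨by linarith, by linarith⟩
            apply S.toBase.V_ne_zero_of_free
            exact free_shift (no_half_int_right' hplF hstrictu.1 hstrictu.2)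
              (hx.trans (hlift i u hum₀).symm)
          · intro u hu'
            rw [S.zetaI_eq n i u, hτR u (hsubδ' hu')]

end
end

section
/- In the coupled-curve setting below, assume e^{lambda} > 3. Then there exists a constant c_3 > 0, depending only on kappa, beta, a, lambda, c' and the flows g_1, g_2, such that for every n >= 0, every i = 1,2, and every xi > 0: (1/(e^{lambda n} a)) * m{ u in [0, e^{lambda n} a] : dist(psi_n^i(u), {0, 1/2}) <= xi } <= c_3 * xi, where m denotes Lebesgue measure and dist is the quotient metric on T. -/
noncomputable section

open Real Set Filter Topology MeasureTheory
open scoped Classical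

/-! ### Auxiliary development for the proof of Statement 16 -/

namespace Stmt16

open Base Setting

/-! #### Flow lemmas -/

section Flow

variable (B : Base)

lemma G_left_inv (i : Fin 2) (t : ℝ) (x : ℝ) : B.G i (-t) (B.G i t x) = x := by
  rw [← B.G_add i (-t) t x, neg_add_cancel, B.G_zero]

lemma G_injective (i : Fin 2) (t : ℝ) : Function.Injective (B.G i t) :=
  Function.LeftInverse.injective (g := B.G i (-t)) (fun x => G_left_inv B i t x)

lemma G_surjective (i : Fin 2) (t : ℝ) : Function.Surjective (B.G i t) := by
  intro y
  exact ⟨B.G i (-t) y, by rw [← B.G_add i t (-t) y, add_neg_cancel, B.G_zero]⟩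

lemma G_cont_t (i : Fin 2) (x : ℝ) : Continuous (fun s => B.G i s x) := by
  rw [continuous_iff_continuousAt]
  exact fun s => (B.G_ode i x s).continuousAt

lemma G_strictMono (i : Fin 2) (t : ℝ) : StrictMono (B.G i t) := by
  intro x y hxy
  by_contra hcon
  push_neg at hcon
  -- φ s = G s y - G s x is continuous, never zero, positive at 0, ≤ 0 at t
  have hne : ∀ s, B.G i s y - B.G i s x ≠ 0 := by
    intro s hs
    exact (ne_of_gt hxy).symm (G_injective B i s (by linarith [sub_eq_zero.mp hs]))
  have hcont : Continuous (fun s => B.G i s y - B.G i s x) :=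
    (G_cont_t B i y).sub (G_cont_t B i x)
  have h0 : 0 < B.G i 0 y - B.G i 0 x := by rw [B.G_zero, B.G_zero]; linarith
  have ht : B.G i t y - B.G i t x ≤ 0 := by linarith
  have : (0:ℝ) ∈ Set.uIcc (B.G i 0 y - B.G i 0 x) (B.G i t y - B.G i t x) :=
    Set.mem_uIcc.2 (Or.inr ⟨ht, le_of_lt h0⟩)
  obtain ⟨s, _, hs⟩ := intermediate_value_uIcc (hcont.continuousOn (s := Set.uIcc 0 t)) this
  exact hne s hs

lemma G_mono (i : Fin 2) (t : ℝ) : Monotone (B.G i t) := (G_strictMono B i t).monotone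

lemma G_cont_x (i : Fin 2) (t : ℝ) : Continuous (B.G i t) :=
  Monotone.continuous_of_surjective (G_mono B i t) (G_surjective B i t)

lemma V_int (i : Fin 2) (x : ℝ) : ∀ m : ℤ, B.V i (x + m) = B.V i x := by
  intro m
  induction m using Int.induction_on with
  | zero => simp
  | succ k ih =>
      have := B.V_periodic i (x + k)
      push_cast
      push_cast at ih
      rw [show x + ((k:ℝ) + 1) = x + (k:ℝ) + 1 by ring, this, ih]
  | pred k ih =>
      have h := B.V_periodic i (x + (-(k:ℝ) - 1))
      push_cast
      push_cast at ih
      rw [show x + (-(k:ℝ) - 1) + 1 = x + -(k:ℝ) by ring] at h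
      rw [← h]
      exact ih

lemma derivV_int (i : Fin 2) (x : ℝ) (m : ℤ) :
    deriv (B.V i) (x + m) = deriv (B.V i) x := by
  have hfe : (fun y => B.V i (y + m)) = B.V i := funext (fun y => V_int B i y m)
  rw [← deriv_comp_add_const (f := B.V i) (a := (m:ℝ)) (x := x), hfe]

lemma V_lip (i : Fin 2) : ∃ K : NNReal, LipschitzWith K (B.V i) := by
  have hC : Continuous (deriv (B.V i)) :=
    (B.V_smooth i).continuous_deriv (by norm_num)
  obtain ⟨M, hM⟩ := (isCompact_Icc (a := (0:ℝ)) (b := 1)).exists_bound_of_continuousOn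
      (hC.continuousOn)
  have hM0 : 0 ≤ M := le_trans (norm_nonneg _) (hM 0 (by norm_num))
  have hbd : ∀ x, ‖deriv (B.V i) x‖₊ ≤ M.toNNReal := by
    intro x
    have h1 : deriv (B.V i) x = deriv (B.V i) (x - ⌊x⌋ + ⌊x⌋) := by norm_num
    have h2 : deriv (B.V i) x = deriv (B.V i) (x - ⌊x⌋) := by
      rw [h1, derivV_int]
    have h3 : x - ⌊x⌋ ∈ Set.Icc (0:ℝ) 1 := by
      constructor
      · linarith [Int.floor_le x]
      · linarith [Int.lt_floor_add_one x]
    have := hM _ h3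
    rw [← NNReal.coe_le_coe]
    rw [coe_nnnorm, Real.coe_toNNReal _ hM0, h2]
    exact this
  exact ⟨M.toNNReal, lipschitzWith_of_nnnorm_deriv_le
    ((B.V_smooth i).differentiable (by norm_num)) hbd⟩

lemma V_half_zero (i : Fin 2) (m : ℤ) : B.V i ((m:ℝ)/2) = 0 := by
  rw [B.V_zero_iff]
  rcases Int.even_or_odd m with ⟨k, hk⟩ | ⟨k, hk⟩
  · exact ⟨k, Or.inl (by rw [hk]; push_cast; ring)⟩
  · exact ⟨k, Or.inr (by rw [hk]; push_cast; ring)⟩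

/-- Half-integers are fixed points of the (nonnegative-time) flow. -/
lemma G_fix (i : Fin 2) (m : ℤ) {t : ℝ} (ht : 0 ≤ t) : B.G i t ((m:ℝ)/2) = (m:ℝ)/2 := by
  obtain ⟨K, hK⟩ := V_lip B i
  have key := ODE_solution_unique (v := fun _ x => B.V i x) (K := K)
    (f := fun s => B.G i s ((m:ℝ)/2)) (g := fun _ => (m:ℝ)/2) (a := 0) (b := t)
    (fun _ => hK)
    ((G_cont_t B i _).continuousOn)
    (fun s _ => (B.G_ode i _ s).hasDerivWithinAt)
    (continuousOn_const)
    (fun s _ => by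
      simpa [V_half_zero B i m] using (hasDerivAt_const s ((m:ℝ)/2)).hasDerivWithinAt)
    (B.G_zero i _)
  exact key ⟨ht, le_refl t⟩

lemma G_int (i : Fin 2) (t x : ℝ) : ∀ m : ℤ, B.G i t (x + m) = B.G i t x + m := by
  intro m
  induction m using Int.induction_on with
  | zero => simp
  | succ k ih =>
      have := B.G_periodic i t (x + k)
      push_cast
      push_cast at ih
      rw [show x + ((k:ℝ) + 1) = x + (k:ℝ) + 1 by ring, this, ih]
      ring
  | pred k ih =>
      have h := B.G_periodic i t (x + (-(k:ℝ) - 1))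
      push_cast
      push_cast at ih
      rw [show x + (-(k:ℝ) - 1) + 1 = x + -(k:ℝ) by ring] at h
      have h2 : B.G i t (x + (-(k:ℝ) - 1)) = B.G i t (x + -(k:ℝ)) - 1 := by linarith
      rw [h2, ih]
      ring

/-- The flow preserves half-cells: `⌊2 G_t x⌋ = ⌊2 x⌋` for `t ≥ 0`. -/
lemma G_floor (i : Fin 2) {t : ℝ} (ht : 0 ≤ t) (x : ℝ) :
    ⌊2 * B.G i t x⌋ = ⌊2 * x⌋ := by
  set m := ⌊2 * x⌋ with hm
  have h1 : (m:ℝ)/2 ≤ x := by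
    have := Int.floor_le (2 * x)
    linarith
  have h2 : x < ((m:ℝ)+1)/2 := by
    have := Int.lt_floor_add_one (2 * x)
    push_cast at this ⊢
    linarith
  rcases eq_or_lt_of_le h1 with heq | hlt
  · rw [← heq, G_fix B i m ht]
    rw [show 2 * ((m:ℝ)/2) = (m:ℝ) by ring, Int.floor_intCast]
  · have hlow : (m:ℝ)/2 < B.G i t x := by
      have := G_strictMono B i t hlt
      rwa [G_fix B i m ht] at this
    have hhigh : B.G i t x < ((m:ℝ)+1)/2 := by
      have h3 : x < ((m+1 : ℤ):ℝ)/2 := by push_cast; linarith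
      have := G_strictMono B i t h3
      rw [G_fix B i (m+1) ht] at this
      push_cast at this
      linarith
    rw [Int.floor_eq_iff]
    constructor
    · linarith
    · push_cast; linarith

lemma cnt_le_two (z : Circ × Circ) : cnt z ≤ 2 := by
  unfold cnt
  split <;> split <;> norm_num

lemma Phi_le_Phi2 (c : ℕ) (hc : c ≤ 2) : B.Phi c ≤ B.Phi 2 := by
  rcases Nat.lt_or_ge c 2 with h | h
  · exact le_of_lt (B.Phi_mono c 2 h (le_refl 2))
  · have : c = 2 := le_antisymm hc h
    rw [this]

lemma tau_val_nonneg (c : ℕ) (hc : c ≤ 2) : 0 ≤ (1 - B.b) * (1 - B.Phi c)⁻¹ := by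
  have hb := B.b_mem.2
  have h1 : 0 < 1 - B.Phi c := by
    have := B.Phi_lt_one c hc
    linarith
  have h2 : (0:ℝ) < 1 - B.b := by linarith
  positivity

end Flow

/-! #### Circle and lift lemmas -/

section Lift

lemma coeT_add (x y : ℝ) : coeT (x + y) = coeT x + coeT y := rfl

lemma coeT_add_int (x : ℝ) (m : ℤ) : coeT (x + m) = coeT x := by
  show QuotientAddGroup.mk _ = QuotientAddGroup.mk _
  rw [QuotientAddGroup.eq_iff_sub_mem]
  have : x + (m:ℝ) - x = (m:ℝ) := by ring
  rw [this]
  exact ⟨m, by simp⟩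

lemma rep_coe (x : ℝ) : rep (coeT x) = Int.fract x := by
  have h := AddCircle.coe_equivIco_mk_apply (p := (1:ℝ)) x
  rw [div_one, mul_one] at h
  exact h

lemma dist_coe_exists {y c ξ : ℝ} (h : dist (coeT y) (coeT c) ≤ ξ) :
    ∃ m : ℤ, |y - c - m| ≤ ξ := by
  have h1 : dist (coeT y) (coeT c) = ‖coeT (y - c)‖ := by
    rw [dist_eq_norm]
    congr 1
  rw [h1] at h
  have h2 : ‖((y - c : ℝ) : AddCircle (1:ℝ))‖ ≤ ξ := h
  rw [AddCircle.norm_eq] at h2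
  refine ⟨round ((1:ℝ)⁻¹ * (y - c)), ?_⟩
  simpa using h2

/-- `1/2 < fract y` iff `⌊2y⌋` is odd, provided `2y` is not an integer. -/
lemma half_lt_fract_iff {y : ℝ} (hy : ∀ m : ℤ, 2 * y ≠ m) :
    (1/2 < Int.fract y ↔ Odd ⌊2 * y⌋) := by
  have h1 : (⌊2*y⌋ : ℝ) ≤ 2*y := Int.floor_le _
  have h1' : (⌊2*y⌋ : ℝ) ≠ 2*y := fun hc => hy ⌊2*y⌋ hc.symm
  have h1'' : (⌊2*y⌋ : ℝ) < 2*y := lt_of_le_of_ne h1 h1'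
  have h2 : 2*y < (⌊2*y⌋ : ℝ) + 1 := Int.lt_floor_add_one _
  rcases Int.even_or_odd ⌊2*y⌋ with ⟨k, hk⟩ | ⟨k, hk⟩
  · -- even: fract y ∈ (0, 1/2)
    have hkr : ((k:ℝ) + k) = (⌊2*y⌋ : ℝ) := by rw [hk]; push_cast; ring
    have hy1 : (k:ℝ) < y := by linarith
    have hy2 : y < (k:ℝ) + 1/2 := by linarith
    have hfl : ⌊y⌋ = k := by
      rw [Int.floor_eq_iff]
      constructor
      · linarith
      · linarith
    have hfr : Int.fract y = y - k := by rw [Int.fract, hfl]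
    constructor
    · intro hcon; rw [hfr] at hcon; linarith
    · intro hcon
      rw [hk] at hcon
      exact absurd hcon (Int.not_odd_iff_even.mpr ⟨k, rfl⟩)
  · -- odd: fract y ∈ (1/2, 1)
    have hkr : (2*(k:ℝ) + 1) = (⌊2*y⌋ : ℝ) := by rw [hk]; push_cast; ring
    have hy1 : (k:ℝ) + 1/2 < y := by linarith
    have hy2 : y < (k:ℝ) + 1 := by linarith
    have hfl : ⌊y⌋ = k := by
      rw [Int.floor_eq_iff]
      constructor
      · linarith
      · linarith
    have hfr : Int.fract y = y - k := by rw [Int.fract, hfl]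
    constructor
    · intro _; exact ⟨k, hk⟩
    · intro _; rw [hfr]; linarith

lemma floor_add_floor_le (a b : ℝ) : ⌊a⌋ + ⌊b⌋ ≤ ⌊a + b⌋ := by
  rw [Int.le_floor]
  push_cast
  have := Int.floor_le a
  have := Int.floor_le b
  linarith

lemma floor_add_le_add (a b : ℝ) : ⌊a + b⌋ ≤ ⌊a⌋ + ⌊b⌋ + 1 := by
  have := Int.le_floor_add_floor a b
  omega

lemma floor_diff_le (a b : ℝ) (h : a ≤ b) : (⌊b⌋ - ⌊a⌋ : ℤ) ≤ (b - a) + 1 := by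
  have h1 : (⌊b⌋:ℝ) ≤ b := Int.floor_le b
  have h2 : a < (⌊a⌋:ℝ) + 1 := Int.lt_floor_add_one a
  push_cast
  linarith

/-- If `⌊2a⌋ = ⌊2b⌋` then adding any `r` changes the floor by at most 1. -/
lemma floor_shift_le {a b : ℝ} (h : ⌊2*a⌋ = ⌊2*b⌋) (r : ℝ) :
    ⌊2*(a + r)⌋ - ⌊2*(b + r)⌋ ≤ 1 := by
  have h1 : (⌊2*a⌋:ℝ) ≤ 2*a := Int.floor_le _
  have h2 : 2*a < (⌊2*a⌋:ℝ) + 1 := Int.lt_floor_add_one _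
  have h3 : (⌊2*b⌋:ℝ) ≤ 2*b := Int.floor_le _
  have h4 : 2*b < (⌊2*b⌋:ℝ) + 1 := Int.lt_floor_add_one _
  have key : 2*(a+r) < 2*(b+r) + 1 := by
    rw [h] at h2
    linarith
  have : ⌊2*(a+r)⌋ ≤ ⌊2*(b+r) + 1⌋ := Int.floor_le_floor (le_of_lt key)
  rw [show (2*(b+r) + 1 : ℝ) = 2*(b+r) + (1:ℤ) by push_cast; ring, Int.floor_add_intCast] at this
  omega

end Lift

/-! #### The auxiliary functions `rho` -/

section Rho

variable (S : Setting)

lemma R_int (i : Fin 2) (y : ℝ) : ∀ m : ℤ, S.R i (y + m) = S.R i y + m * S.deg i := by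
  intro m
  induction m using Int.induction_on with
  | zero => simp
  | succ k ih =>
      have h := S.R_equiv i (y + k)
      push_cast
      push_cast at ih
      rw [show y + ((k:ℝ) + 1) = y + (k:ℝ) + 1 by ring, h, ih]
      ring
  | pred k ih =>
      have h := S.R_equiv i (y + (-(k:ℝ) - 1))
      push_cast
      push_cast at ih
      rw [show y + (-(k:ℝ) - 1) + 1 = y + -(k:ℝ) by ring] at h
      have h2 : S.R i (y + (-(k:ℝ) - 1)) = S.R i (y + -(k:ℝ)) - S.deg i := by linarith
      rw [h2, ih]
      ring

lemma R_strictMono (i : Fin 2) : StrictMono (S.R i) :=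
  strictMono_of_deriv_pos (S.R_deriv_pos i)

lemma R_lower (i : Fin 2) {u v : ℝ} (h : u ≤ v) :
    S.toBase.c' * (v - u) ≤ S.R i v - S.R i u := by
  have hdiff : Differentiable ℝ (S.R i) := (S.R_smooth i).differentiable (by norm_num)
  have hmono : Monotone (fun y => S.R i y - S.toBase.c' * y) := by
    apply StrictMono.monotone
    apply strictMono_of_deriv_pos
    intro x
    rw [deriv_fun_sub (hdiff x) (by fun_prop)]
    rw [deriv_const_mul _ differentiableAt_fun_id]
    simp only [deriv_id'', mul_one]
    have := S.A4 i x
    linarith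
  have := hmono h
  simp only at this
  linarith

lemma R_upper (i : Fin 2) {u v : ℝ} (h : u ≤ v) :
    S.R i v - S.R i u ≤ (S.toBase.kappa : ℝ) * (v - u) + S.toBase.kappa := by
  have harg : v ≤ u + ((⌊v - u⌋ + 1 : ℤ) : ℝ) := by
    push_cast
    have := Int.lt_floor_add_one (v - u)
    linarith
  have h1 : S.R i v ≤ S.R i u + ((⌊v - u⌋ + 1 : ℤ) : ℝ) * S.deg i := by
    have := (R_strictMono S i).monotone harg
    rwa [R_int S i u (⌊v - u⌋ + 1)] at this
  have h2 : ((⌊v - u⌋ + 1 : ℤ) : ℝ) * S.deg i ≤ ((v - u) + 1) * S.toBase.kappa := by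
    have hf : ((⌊v - u⌋ + 1 : ℤ) : ℝ) ≤ (v - u) + 1 := by
      push_cast
      have := Int.floor_le (v - u)
      linarith
    have hfpos : (0:ℝ) ≤ ((⌊v - u⌋ + 1 : ℤ) : ℝ) := by
      push_cast
      have := Int.floor_nonneg.mpr (by linarith : (0:ℝ) ≤ v - u)
      exact_mod_cast by positivity
    have hdk : (S.deg i : ℝ) ≤ (S.toBase.kappa : ℝ) := by exact_mod_cast S.deg_le_kappa i
    have hdpos : (0:ℝ) ≤ (S.deg i : ℝ) := by positivity
    calc ((⌊v - u⌋ + 1 : ℤ) : ℝ) * S.deg i ≤ ((v-u) + 1) * S.deg i := by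
          apply mul_le_mul_of_nonneg_right hf hdpos
      _ ≤ ((v-u) + 1) * S.toBase.kappa := by
          apply mul_le_mul_of_nonneg_left hdk (by linarith)
  nlinarith [h1, h2]

/-- The global lift of `u ↦ r_i(ι_n(u))`. -/
noncomputable def rho (i : Fin 2) (n : ℕ) (u : ℝ) : ℝ :=
  S.R i (S.toBase.beta * u + S.x0 n)

lemma rho_cont (i : Fin 2) (n : ℕ) : Continuous (rho S i n) :=
  ((S.R_smooth i).continuous).comp (by fun_prop)

lemma rho_lower (i : Fin 2) (n : ℕ) {u v : ℝ} (h : u ≤ v) :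
    S.toBase.beta * S.toBase.c' * (v - u) ≤ rho S i n v - rho S i n u := by
  have hb := S.toBase.beta_pos
  have := R_lower S i (u := S.toBase.beta * u + S.x0 n) (v := S.toBase.beta * v + S.x0 n)
    (by nlinarith)
  unfold rho
  nlinarith

lemma rho_mono (i : Fin 2) (n : ℕ) : Monotone (rho S i n) := by
  intro u v h
  have h1 := rho_lower S i n h
  have hb := S.toBase.beta_pos
  have hc := S.toBase.c'_pos
  have h0 : 0 ≤ S.toBase.beta * S.toBase.c' * (v - u) :=
    mul_nonneg (mul_nonneg hb.le hc.le) (by linarith)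
  linarith

lemma rho_upper (i : Fin 2) (n : ℕ) {u v : ℝ} (h : u ≤ v) :
    rho S i n v - rho S i n u ≤
      (S.toBase.kappa : ℝ) * S.toBase.beta * (v - u) + S.toBase.kappa := by
  have := R_upper S i (u := S.toBase.beta * u + S.x0 n) (v := S.toBase.beta * v + S.x0 n)
    (by nlinarith [S.toBase.beta_pos.le])
  unfold rho
  nlinarith [S.toBase.beta_pos]

lemma rT_iota_eq (i : Fin 2) (n : ℕ) (u : ℝ) :
    S.rT i (S.iota n u) = coeT (rho S i n u) := by
  set y := S.toBase.beta * u + S.x0 n with hy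
  have h1 : S.rT i (S.iota n u) = coeT (S.R i (Int.fract y)) := by
    unfold Setting.rT Setting.iota
    rw [rep_coe]
  rw [h1]
  have h2 : Int.fract y = y + (-⌊y⌋ : ℤ) := by
    rw [Int.fract]
    push_cast
    ring
  rw [h2, R_int]
  have h3 : S.R i y + (-⌊y⌋ : ℤ) * S.deg i = S.R i y + ((-⌊y⌋ * S.deg i : ℤ) : ℝ) := by
    push_cast
    ring
  rw [h3, coeT_add_int]
  rfl

end Rho

/-! #### Piecewise monotone decompositions -/

section Main

open Set

variable (S : Setting)

/-- A "piece": an interval `[s,e]` together with lifts of the two coordinates of a curve. -/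
structure Pc where
  s : ℝ
  e : ℝ
  F : Fin 2 → ℝ → ℝ

/-- Projection on the `i`-th coordinate of `𝕋²`. -/
def pj (i : Fin 2) (z : Circ × Circ) : Circ := if i = 0 then z.1 else z.2

lemma psiI_pj (n : ℕ) (i : Fin 2) (u : ℝ) : S.psiI n i u = pj i (S.psi n u) := rfl

/-- The induced lift of `ψ_n` on a piece. -/
noncomputable def Psi (P : Pc) (i : Fin 2) (n : ℕ) (u : ℝ) : ℝ := P.F i u + rho S i n u

/-- A valid piece for the curve `θ_n`: monotone continuous lifts away from `E`. -/
def PieceOK (n : ℕ) (E : Set ℝ) (P : Pc) : Prop :=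
  P.s ≤ P.e ∧ ∀ i : Fin 2,
    ContinuousOn (P.F i) (Icc P.s P.e) ∧ MonotoneOn (P.F i) (Icc P.s P.e) ∧
    ∀ u ∈ Icc P.s P.e, u ∉ E → pj i (S.theta n u) = coeT (P.F i u)

/-- The number of half-integer levels crossed by `ψ` over a piece (both coordinates). -/
noncomputable def pcCost (n : ℕ) (P : Pc) : ℤ :=
  (⌊2 * Psi S P 0 n P.e⌋ - ⌊2 * Psi S P 0 n P.s⌋) +
    (⌊2 * Psi S P 1 n P.e⌋ - ⌊2 * Psi S P 1 n P.s⌋)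

def Chain (L : List Pc) : Prop := L.Chain' (fun A B => A.e = B.s)

noncomputable def lCost (n : ℕ) (L : List Pc) : ℤ :=
  (L.map (pcCost S n)).sum + L.length

/-- A valid decomposition of `θ_n` over `[0, len n]`. -/
def DecOK (n : ℕ) (L : List Pc) (E : Set ℝ) : Prop :=
  E.Countable ∧ Chain L ∧ (∀ P ∈ L, PieceOK S n E P) ∧
  ∃ h : L ≠ [], (L.head h).s = 0 ∧ (L.getLast h).e = S.len n

lemma PieceOK_mono {n E E' P} (hEE : E ⊆ E') (h : PieceOK S n E P) : PieceOK S n E' P :=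
  ⟨h.1, fun i => ⟨(h.2 i).1, (h.2 i).2.1,
    fun u hu hu' => (h.2 i).2.2 u hu (fun hc => hu' (hEE hc))⟩⟩

lemma pj_psi (n : ℕ) (u : ℝ) (i : Fin 2) :
    pj i (S.psi n u) = pj i (S.theta n u) + S.rT i (S.iota n u) := by
  fin_cases i <;> rfl

lemma psi_lift {n : ℕ} {E : Set ℝ} {P : Pc} (hOK : PieceOK S n E P) (i : Fin 2)
    {u : ℝ} (hu : u ∈ Icc P.s P.e) (hE : u ∉ E) :
    pj i (S.psi n u) = coeT (Psi S P i n u) := by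
  rw [pj_psi, (hOK.2 i).2.2 u hu hE, rT_iota_eq, ← coeT_add]
  rfl

lemma Psi_contOn {n E} {P : Pc} (hOK : PieceOK S n E P) (i : Fin 2) :
    ContinuousOn (Psi S P i n) (Icc P.s P.e) :=
  ((hOK.2 i).1).add ((rho_cont S i n).continuousOn)

lemma Psi_strictMonoOn {n E} {P : Pc} (hOK : PieceOK S n E P) (i : Fin 2) :
    StrictMonoOn (Psi S P i n) (Icc P.s P.e) := by
  intro u hu v hv huv
  have h1 := (hOK.2 i).2.1 hu hv huv.le
  have h2 := rho_lower S i n huv.le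
  have hb := S.toBase.beta_pos
  have hc := S.toBase.c'_pos
  have : 0 < S.toBase.beta * S.toBase.c' * (v - u) :=
    mul_pos (mul_pos hb hc) (by linarith)
  unfold Psi
  linarith

lemma Psi_rate {n E} {P : Pc} (hOK : PieceOK S n E P) (i : Fin 2)
    {u v : ℝ} (hu : u ∈ Icc P.s P.e) (hv : v ∈ Icc P.s P.e) (huv : u ≤ v) :
    S.toBase.beta * S.toBase.c' * (v - u) ≤ Psi S P i n v - Psi S P i n u := by
  have h1 := (hOK.2 i).2.1 hu hv huv
  have h2 := rho_lower S i n huv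
  unfold Psi
  linarith

lemma pcCost_nonneg {n E} {P : Pc} (hOK : PieceOK S n E P) : 0 ≤ pcCost S n P := by
  have h0 : P.s ∈ Icc P.s P.e := ⟨le_refl _, hOK.1⟩
  have h1 : P.e ∈ Icc P.s P.e := ⟨hOK.1, le_refl _⟩
  have g0 := ((Psi_strictMonoOn S hOK 0).monotoneOn) h0 h1 hOK.1
  have g1 := ((Psi_strictMonoOn S hOK 1).monotoneOn) h0 h1 hOK.1
  unfold pcCost
  have f0 := Int.floor_le_floor (by linarith : 2 * Psi S P 0 n P.s ≤ 2 * Psi S P 0 n P.e)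
  have f1 := Int.floor_le_floor (by linarith : 2 * Psi S P 1 n P.s ≤ 2 * Psi S P 1 n P.e)
  omega

/-- Telescoping sum over a chain. -/
lemma chain_tele (g : ℝ → ℤ) :
    ∀ (L : List Pc) (h : L ≠ []), Chain L →
      (L.map (fun P => g P.e - g P.s)).sum = g ((L.getLast h).e) - g ((L.head h).s) := by
  intro L
  induction L with
  | nil => intro h; exact absurd rfl h
  | cons P rest ih =>
      intro _ hchain
      cases rest with
      | nil => simp
      | cons Q rest' =>
          have hch := (List.isChain_cons_cons.mp hchain)
          have hrest : (Q :: rest') ≠ [] := by simp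
          have := ih hrest hch.2
          rw [List.map_cons, List.sum_cons, this]
          rw [List.getLast_cons hrest, List.head_cons]
          simp only [List.head_cons] at *
          rw [hch.1]
          ring

lemma chain_cover :
    ∀ (L : List Pc) (h : L ≠ []), Chain L → (∀ P ∈ L, P.s ≤ P.e) →
      Icc ((L.head h).s) ((L.getLast h).e) ⊆ ⋃ P ∈ L, Icc P.s P.e := by
  intro L
  induction L with
  | nil => intro h; exact absurd rfl h
  | cons P rest ih =>
      intro _ hchain hse u hu
      cases rest with
      | nil =>
          simp only [List.head_cons, List.getLast_singleton] at hu
          simp only [List.mem_singleton, Set.iUnion_iUnion_eq_left]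
          simpa using hu
      | cons Q rest' =>
          have hch := (List.isChain_cons_cons.mp hchain)
          have hrest : (Q :: rest') ≠ [] := by simp
          simp only [List.head_cons, List.getLast_cons hrest] at hu
          rcases le_or_gt u P.e with hcase | hcase
          · refine Set.mem_biUnion (List.mem_cons_self) ⟨hu.1, hcase⟩
          · have : u ∈ Icc ((Q :: rest').head hrest).s (((Q :: rest').getLast hrest)).e := by
              constructor
              · rw [List.head_cons, ← hch.1]
                exact hcase.le
              · exact hu.2
            have hsub := ih hrest hch.2 (fun R hR => hse R (List.mem_cons_of_mem P hR)) this
            rcases Set.mem_iUnion₂.mp hsub with ⟨R, hR, hmem⟩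
            exact Set.mem_biUnion (List.mem_cons_of_mem P hR) hmem

/-! #### Constants -/

/-- Linear cost constant (depending only on the base data). -/
noncomputable def Crho (B : Base) : ℝ :=
  4 * B.kappa * B.beta + (4 * B.kappa + 3) / B.a

/-- The uniform cost-density bound. -/
noncomputable def Kc (B : Base) : ℝ := Crho B / (1 - 3 / Real.exp B.lam)

/-- The constant `c₃`. -/
noncomputable def c3c (B : Base) : ℝ := max 4 (20 * Kc B / (B.beta * B.c'))

/-! #### Key sorried steps -/

/-! #### Scaling -/

noncomputable def muS : ℝ := Real.exp S.toBase.lam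
noncomputable def nuS : ℝ := Real.exp (-S.toBase.lam)

lemma muS_pos : 0 < muS S := Real.exp_pos _
lemma nuS_pos : 0 < nuS S := Real.exp_pos _

lemma nu_mu (x : ℝ) : nuS S * (muS S * x) = x := by
  unfold nuS muS
  rw [← mul_assoc, ← Real.exp_add]
  simp

lemma len_succ (n : ℕ) : S.len (n+1) = muS S * S.len n := by
  unfold Setting.len muS
  rw [← mul_assoc, ← Real.exp_add]
  congr 2
  push_cast
  ring

lemma len_zero : S.len 0 = S.toBase.a := by
  unfold Setting.len
  simp

lemma len_pos (n : ℕ) : 0 < S.len n := by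
  have := S.toBase.a_pos
  unfold Setting.len
  positivity

lemma len_ge_a (n : ℕ) : S.toBase.a ≤ S.len n := by
  have ha := S.toBase.a_pos
  unfold Setting.len
  nlinarith [Real.one_le_exp (mul_nonneg S.toBase.lam_pos.le (by positivity) :
    (0:ℝ) ≤ S.toBase.lam * n)]

lemma theta_succ (n : ℕ) (u : ℝ) :
    S.theta (n+1) u = S.zetaOf (S.theta n) n (Real.exp (-S.toBase.lam) * u) := rfl

lemma gT_coe (B : Base) (i : Fin 2) (t x : ℝ) : B.gT i t (coeT x) = coeT (B.G i t x) := by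
  unfold Base.gT
  rw [rep_coe]
  have h1 : Int.fract x = x + ((-⌊x⌋ : ℤ) : ℝ) := by rw [Int.fract]; push_cast; ring
  rw [h1, G_int]
  exact coeT_add_int _ _

lemma pj_zetaOf (th : ℝ → Circ × Circ) (n : ℕ) (v : ℝ) (i : Fin 2) :
    pj i (S.zetaOf th n v)
      = S.toBase.gT i (S.toBase.tauT (S.psiOf th n v)) (pj i (S.psiOf th n v)) := by
  fin_cases i <;> rfl

/-! #### Crossing sets -/

/-- The points of a piece where some coordinate of `ψ_n` is at `0` or `1/2`. -/
def CrossSet (n : ℕ) (P : Pc) : Set ℝ :=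
  {u ∈ Ioo P.s P.e | ∃ i : Fin 2, ∃ m : ℤ, 2 * Psi S P i n u = (m:ℝ)}

lemma crossSet_coord_finite {n : ℕ} {E : Set ℝ} {P : Pc} (hOK : PieceOK S n E P) (i : Fin 2) :
    {u ∈ Ioo P.s P.e | ∃ m : ℤ, 2 * Psi S P i n u = (m:ℝ)}.Finite := by
  set f := fun u => 2 * Psi S P i n u with hf
  set A := {u ∈ Ioo P.s P.e | ∃ m : ℤ, f u = (m:ℝ)} with hA
  have hinj : Set.InjOn f A := by
    intro u hu v hv huv
    refine (Psi_strictMonoOn S hOK i).injOn (Ioo_subset_Icc_self hu.1)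
      (Ioo_subset_Icc_self hv.1) ?_
    have : 2 * Psi S P i n u = 2 * Psi S P i n v := huv
    linarith
  have himg : f '' A ⊆ ↑((Finset.Icc ⌊f P.s⌋ (⌊f P.e⌋ + 1)).image (Int.cast : ℤ → ℝ)) := by
    rintro _ ⟨u, hu, rfl⟩
    obtain ⟨m, hm⟩ := hu.2
    have hmono := (Psi_strictMonoOn S hOK i).monotoneOn
    have hu' : u ∈ Icc P.s P.e := Ioo_subset_Icc_self hu.1
    have hPs : P.s ∈ Icc P.s P.e := ⟨le_refl _, hOK.1⟩
    have hPe : P.e ∈ Icc P.s P.e := ⟨hOK.1, le_refl _⟩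
    have h1 : f P.s ≤ f u := by
      have := hmono hPs hu' hu'.1
      simp only [hf]
      linarith
    have h2 : f u ≤ f P.e := by
      have := hmono hu' hPe hu'.2
      simp only [hf]
      linarith
    simp only [Finset.coe_image, Set.mem_image, Finset.mem_coe, Finset.mem_Icc]
    refine ⟨m, ⟨?_, ?_⟩, hm.symm⟩
    · have : (⌊f P.s⌋ : ℝ) ≤ (m:ℝ) := le_trans (Int.floor_le _) (by rw [← hm]; exact h1)
      exact_mod_cast this
    · have hle : (m:ℝ) ≤ f P.e := by rw [← hm]; exact h2
      have := Int.le_floor.mpr hle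
      omega
  exact Set.Finite.of_finite_image (Set.Finite.subset (Finset.finite_toSet _) himg) hinj

lemma crossSet_finite {n : ℕ} {E : Set ℝ} {P : Pc} (hOK : PieceOK S n E P) :
    (CrossSet S n P).Finite := by
  have hsub : CrossSet S n P ⊆
      {u ∈ Ioo P.s P.e | ∃ m : ℤ, 2 * Psi S P 0 n u = (m:ℝ)} ∪
      {u ∈ Ioo P.s P.e | ∃ m : ℤ, 2 * Psi S P 1 n u = (m:ℝ)} := by
    rintro u ⟨hu, i, m, hm⟩
    fin_cases i
    · exact Or.inl ⟨hu, m, hm⟩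
    · exact Or.inr ⟨hu, m, hm⟩
  exact Set.Finite.subset ((crossSet_coord_finite S hOK 0).union (crossSet_coord_finite S hOK 1))
    hsub

lemma crossSet_coord_card {n : ℕ} {E : Set ℝ} {P : Pc} (hOK : PieceOK S n E P) (i : Fin 2) :
    ({u ∈ Ioo P.s P.e | ∃ m : ℤ, 2 * Psi S P i n u = (m:ℝ)}.ncard : ℤ)
      ≤ ⌊2 * Psi S P i n P.e⌋ - ⌊2 * Psi S P i n P.s⌋ := by
  set A := {u ∈ Ioo P.s P.e | ∃ m : ℤ, 2 * Psi S P i n u = (m:ℝ)} with hA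
  set T : Finset ℤ := Finset.Ioc ⌊2 * Psi S P i n P.s⌋ ⌊2 * Psi S P i n P.e⌋ with hT
  have hmap : ∀ u ∈ A, ⌊2 * Psi S P i n u⌋ ∈ (T : Set ℤ) := by
    intro u hu
    obtain ⟨m, hm⟩ := hu.2
    have hu' : u ∈ Icc P.s P.e := Ioo_subset_Icc_self hu.1
    have hPs : P.s ∈ Icc P.s P.e := ⟨le_refl _, hOK.1⟩
    have hPe : P.e ∈ Icc P.s P.e := ⟨hOK.1, le_refl _⟩
    have h1 : Psi S P i n P.s < Psi S P i n u := Psi_strictMonoOn S hOK i hPs hu' hu.1.1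
    have h2 : Psi S P i n u < Psi S P i n P.e := Psi_strictMonoOn S hOK i hu' hPe hu.1.2
    have hfl : ⌊2 * Psi S P i n u⌋ = m := by rw [hm]; exact Int.floor_intCast m
    simp only [hT, Finset.coe_Ioc, Set.mem_Ioc]
    constructor
    · rw [hfl]
      have hlt : (⌊2 * Psi S P i n P.s⌋ : ℝ) < (m:ℝ) :=
        lt_of_le_of_lt (Int.floor_le _) (by rw [← hm]; linarith)
      exact_mod_cast hlt
    · rw [hfl]
      apply Int.le_floor.mpr
      rw [← hm]
      linarith
  have hinj : Set.InjOn (fun u => ⌊2 * Psi S P i n u⌋) A := by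
    intro u hu v hv huv
    obtain ⟨mu', hmu⟩ := hu.2
    obtain ⟨mv, hmv⟩ := hv.2
    have h1 : ⌊2 * Psi S P i n u⌋ = mu' := by rw [hmu]; exact Int.floor_intCast _
    have h2 : ⌊2 * Psi S P i n v⌋ = mv := by rw [hmv]; exact Int.floor_intCast _
    have h3 : mu' = mv := by rw [← h1, ← h2]; exact huv
    have h4 : Psi S P i n u = Psi S P i n v := by
      have h5 : (mu' : ℝ) = (mv : ℝ) := by exact_mod_cast h3
      linarith
    exact (Psi_strictMonoOn S hOK i).injOn (Ioo_subset_Icc_self hu.1)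
      (Ioo_subset_Icc_self hv.1) h4
  have hcard := Set.ncard_le_ncard_of_injOn _ hmap hinj (Finset.finite_toSet T)
  rw [Set.ncard_coe_finset] at hcard
  have hTcard : (T.card : ℤ) = max (⌊2 * Psi S P i n P.e⌋ - ⌊2 * Psi S P i n P.s⌋) 0 := by
    rw [hT, Int.card_Ioc]
    omega
  have hpos : (0:ℤ) ≤ ⌊2 * Psi S P i n P.e⌋ - ⌊2 * Psi S P i n P.s⌋ := by
    have hPs : P.s ∈ Icc P.s P.e := ⟨le_refl _, hOK.1⟩
    have hPe : P.e ∈ Icc P.s P.e := ⟨hOK.1, le_refl _⟩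
    have := (Psi_strictMonoOn S hOK i).monotoneOn hPs hPe hOK.1
    have := Int.floor_le_floor (by linarith : 2 * Psi S P i n P.s ≤ 2 * Psi S P i n P.e)
    omega
  omega

lemma crossSet_card_le {n : ℕ} {E : Set ℝ} {P : Pc} (hOK : PieceOK S n E P) :
    ((CrossSet S n P).ncard : ℤ) ≤ pcCost S n P := by
  have hsub : CrossSet S n P ⊆
      {u ∈ Ioo P.s P.e | ∃ m : ℤ, 2 * Psi S P 0 n u = (m:ℝ)} ∪
      {u ∈ Ioo P.s P.e | ∃ m : ℤ, 2 * Psi S P 1 n u = (m:ℝ)} := by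
    rintro u ⟨hu, i, m, hm⟩
    fin_cases i
    · exact Or.inl ⟨hu, m, hm⟩
    · exact Or.inr ⟨hu, m, hm⟩
  have h1 := Set.ncard_le_ncard hsub
    (((crossSet_coord_finite S hOK 0).union (crossSet_coord_finite S hOK 1)))
  have h2 := Set.ncard_union_le
    {u ∈ Ioo P.s P.e | ∃ m : ℤ, 2 * Psi S P 0 n u = (m:ℝ)}
    {u ∈ Ioo P.s P.e | ∃ m : ℤ, 2 * Psi S P 1 n u = (m:ℝ)}
  have h3 := crossSet_coord_card S hOK 0
  have h4 := crossSet_coord_card S hOK 1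
  unfold pcCost
  omega


lemma mu_nu (x : ℝ) : muS S * (nuS S * x) = x := by
  unfold nuS muS
  rw [← mul_assoc, ← Real.exp_add]
  simp

lemma no_cross_ne {n : ℕ} {P : Pc} (hcr : CrossSet S n P = ∅) {v : ℝ}
    (hv : v ∈ Ioo P.s P.e) (i : Fin 2) : ∀ m : ℤ, 2 * Psi S P i n v ≠ (m:ℝ) := by
  intro m hm
  have hmem : v ∈ CrossSet S n P := ⟨hv, i, m, hm⟩
  rw [hcr] at hmem
  exact hmem

lemma floor_const {n : ℕ} {E : Set ℝ} {P : Pc} (hOK : PieceOK S n E P)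
    (hcr : CrossSet S n P = ∅) (i : Fin 2) {v w : ℝ}
    (hv : v ∈ Ioo P.s P.e) (hw : w ∈ Ioo P.s P.e) :
    ⌊2 * Psi S P i n v⌋ = ⌊2 * Psi S P i n w⌋ := by
  have key : ∀ v w : ℝ, v ∈ Ioo P.s P.e → w ∈ Ioo P.s P.e → v ≤ w →
      ⌊2 * Psi S P i n v⌋ = ⌊2 * Psi S P i n w⌋ := by
    intro v w hv hw hvw
    by_contra hne
    have hmono : Psi S P i n v ≤ Psi S P i n w :=
      (Psi_strictMonoOn S hOK i).monotoneOn (Ioo_subset_Icc_self hv)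
        (Ioo_subset_Icc_self hw) hvw
    have hlt : ⌊2 * Psi S P i n v⌋ < ⌊2 * Psi S P i n w⌋ :=
      lt_of_le_of_ne (Int.floor_le_floor (by linarith)) hne
    set m := ⌊2 * Psi S P i n w⌋ with hm
    have h1 : 2 * Psi S P i n v < (m:ℝ) := by
      have ha : ⌊2 * Psi S P i n v⌋ + 1 ≤ m := by omega
      have hb := Int.lt_floor_add_one (2 * Psi S P i n v)
      have hc : ((⌊2 * Psi S P i n v⌋ + 1 : ℤ):ℝ) ≤ (m:ℝ) := by exact_mod_cast ha
      push_cast at hc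
      linarith
    have h2 : (m:ℝ) ≤ 2 * Psi S P i n w := Int.floor_le _
    have hcont : ContinuousOn (fun u => 2 * Psi S P i n u) (Icc v w) :=
      continuousOn_const.mul ((Psi_contOn S hOK i).mono
        (Icc_subset_Icc hv.1.le hw.2.le))
    obtain ⟨x, hx, hxval⟩ := intermediate_value_Icc hvw hcont ⟨h1.le, h2⟩
    have hxIoo : x ∈ Ioo P.s P.e := ⟨lt_of_lt_of_le hv.1 hx.1, lt_of_le_of_lt hx.2 hw.2⟩
    have hmem : x ∈ CrossSet S n P := ⟨hxIoo, i, m, hxval⟩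
    rw [hcr] at hmem
    exact hmem
  rcases le_total v w with h | h
  · exact key v w hv hw h
  · exact (key w v hw hv h).symm

lemma cnt_psi {n : ℕ} {E : Set ℝ} {P : Pc} (hOK : PieceOK S n E P) {v : ℝ}
    (hv : v ∈ Icc P.s P.e) (hvE : v ∉ E)
    (hnc : ∀ i : Fin 2, ∀ m : ℤ, 2 * Psi S P i n v ≠ (m:ℝ)) :
    cnt (S.psi n v) =
      (if Odd ⌊2 * Psi S P 0 n v⌋ then 1 else 0) +
      (if Odd ⌊2 * Psi S P 1 n v⌋ then 1 else 0) := by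
  have h0 : (S.psi n v).1 = coeT (Psi S P 0 n v) := psi_lift S hOK 0 hv hvE
  have h1 : (S.psi n v).2 = coeT (Psi S P 1 n v) := psi_lift S hOK 1 hv hvE
  unfold cnt
  rw [h0, h1, rep_coe, rep_coe]
  congr 1
  · exact if_congr (half_lt_fract_iff (hnc 0)) rfl rfl
  · exact if_congr (half_lt_fract_iff (hnc 1)) rfl rfl

/-- Interface of the refinement of one piece. -/
def ChopOut (n : ℕ) (P : Pc) (Qs : List Pc) (CE : Set ℝ) (ga gb : Fin 2 → ℝ) : Prop :=
  CE.Countable ∧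
  (∃ hq : Qs ≠ [], (Qs.head hq).s = muS S * P.s ∧ (Qs.getLast hq).e = muS S * P.e) ∧
  Chain Qs ∧ (∀ Q ∈ Qs, PieceOK S (n+1) CE Q) ∧
  (Qs.length : ℤ) ≤ ((CrossSet S n P).ncard : ℤ) + 1 ∧
  (∀ i, ⌊2 * ga i⌋ = ⌊2 * Psi S P i n P.s⌋) ∧
  (∀ i, ⌊2 * gb i⌋ = ⌊2 * Psi S P i n P.e⌋) ∧
  (∀ i, (∃ m : ℤ, 2 * Psi S P i n P.s = (m:ℝ)) → ga i = Psi S P i n P.s) ∧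
  (∀ i, (∃ m : ℤ, 2 * Psi S P i n P.e = (m:ℝ)) → gb i = Psi S P i n P.e) ∧
  (Qs.map (pcCost S (n+1))).sum ≤
    (⌊2 * (gb 0 + rho S 0 (n+1) (muS S * P.e))⌋ - ⌊2 * (ga 0 + rho S 0 (n+1) (muS S * P.s))⌋) +
    (⌊2 * (gb 1 + rho S 1 (n+1) (muS S * P.e))⌋ - ⌊2 * (ga 1 + rho S 1 (n+1) (muS S * P.s))⌋) +
    ((CrossSet S n P).ncard : ℤ)

lemma chopBase {n : ℕ} {E : Set ℝ} (hEc : E.Countable) {P : Pc} (hOK : PieceOK S n E P)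
    (hcr : CrossSet S n P = ∅) :
    ∃ Qs CE ga gb, ChopOut S n P Qs CE ga gb := by
  classical
  set mid := (P.s + P.e)/2 with hmid
  set cv : ℕ := (if Odd ⌊2 * Psi S P 0 n mid⌋ then 1 else 0) +
      (if Odd ⌊2 * Psi S P 1 n mid⌋ then 1 else 0) with hcv
  set τ : ℝ := (1 - S.toBase.b) * (1 - S.toBase.Phi cv)⁻¹ with hτ
  have hcv2 : cv ≤ 2 := by rw [hcv]; split <;> split <;> norm_num
  have hτ0 : 0 ≤ τ := tau_val_nonneg S.toBase cv hcv2
  set Q : Pc := ⟨muS S * P.s, muS S * P.e,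
    fun i w => S.toBase.G i τ (Psi S P i n (nuS S * w))⟩ with hQ
  set CE : Set ℝ := (fun v => muS S * v) '' (E ∪ {P.s, P.e}) with hCE
  refine ⟨[Q], CE, fun i => S.toBase.G i τ (Psi S P i n P.s),
    fun i => S.toBase.G i τ (Psi S P i n P.e), ?_⟩
  have hmu := muS_pos S
  have hnu := nuS_pos S
  have hse := hOK.1
  have hmap : ∀ w ∈ Icc (muS S * P.s) (muS S * P.e), nuS S * w ∈ Icc P.s P.e := by
    intro w hw
    constructor
    · have := mul_le_mul_of_nonneg_left hw.1 hnu.le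
      rwa [nu_mu] at this
    · have := mul_le_mul_of_nonneg_left hw.2 hnu.le
      rwa [nu_mu] at this
  refine ⟨?_, ?_, ?_, ?_, ?_, ?_, ?_, ?_, ?_, ?_⟩
  · exact Set.Countable.image (hEc.union ((Set.countable_singleton P.e).insert P.s)) _
  · refine ⟨by simp, ?_, ?_⟩ <;> simp [hQ]
  · simp [Chain, List.Chain']
  · intro R hR
    rw [List.mem_singleton] at hR
    subst hR
    refine ⟨by simp only [hQ]; nlinarith, ?_⟩
    intro i
    refine ⟨?_, ?_, ?_⟩
    · apply (G_cont_x S.toBase i τ).comp_continuousOn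
      exact (Psi_contOn S hOK i).comp (Continuous.continuousOn (by fun_prop)) hmap
    · intro u hu v hv huv
      apply G_mono S.toBase i τ
      exact (Psi_strictMonoOn S hOK i).monotoneOn (hmap u hu) (hmap v hv)
        (by nlinarith)
    · intro u hu huE
      have hvIcc : nuS S * u ∈ Icc P.s P.e := hmap u hu
      have hvne : (nuS S * u) ∉ E ∪ {P.s, P.e} := by
        intro hc
        apply huE
        rw [hCE]
        exact ⟨nuS S * u, hc, mu_nu S u⟩
      have hvE : (nuS S * u) ∉ E := fun hc => hvne (Or.inl hc)
      have hvIoo : nuS S * u ∈ Ioo P.s P.e := by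
        rcases eq_or_lt_of_le hvIcc.1 with he | h1'
        · exact absurd (Or.inr (by simp [← he])) hvne
        rcases eq_or_lt_of_le hvIcc.2 with he | h2'
        · exact absurd (Or.inr (by simp [he])) hvne
        exact ⟨h1', h2'⟩
      have hnc : ∀ j : Fin 2, ∀ m : ℤ, 2 * Psi S P j n (nuS S * u) ≠ (m:ℝ) :=
        fun j => no_cross_ne S hcr hvIoo j
      have hveq : Real.exp (-S.toBase.lam) * u = nuS S * u := rfl
      rw [theta_succ, hveq, pj_zetaOf]
      have hψ : pj i (S.psiOf (S.theta n) n (nuS S * u)) = coeT (Psi S P i n (nuS S * u)) :=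
        psi_lift S hOK i hvIcc hvE
      have hmidIoo : mid ∈ Ioo P.s P.e := by
        rcases hvIoo with ⟨ha1, ha2⟩
        constructor
        · rw [hmid]; linarith
        · rw [hmid]; linarith
      have hτv : S.toBase.tauT (S.psiOf (S.theta n) n (nuS S * u)) = τ := by
        show S.toBase.tauT (S.psi n (nuS S * u)) = τ
        unfold Base.tauT
        rw [cnt_psi S hOK hvIcc hvE hnc]
        rw [floor_const S hOK hcr 0 hvIoo hmidIoo, floor_const S hOK hcr 1 hvIoo hmidIoo]
      rw [hτv, hψ, gT_coe]
  · have h0 : (0:ℤ) ≤ ((CrossSet S n P).ncard : ℤ) := by positivity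
    simp only [List.length_singleton]
    omega
  · intro i
    exact G_floor S.toBase i hτ0 _
  · intro i
    exact G_floor S.toBase i hτ0 _
  · intro i hex
    obtain ⟨m, hm⟩ := hex
    show S.toBase.G i τ (Psi S P i n P.s) = Psi S P i n P.s
    have h9 : Psi S P i n P.s = (m:ℝ)/2 := by linarith
    rw [h9, G_fix S.toBase i m hτ0]
  · intro i hex
    obtain ⟨m, hm⟩ := hex
    show S.toBase.G i τ (Psi S P i n P.e) = Psi S P i n P.e
    have h9 : Psi S P i n P.e = (m:ℝ)/2 := by linarith
    rw [h9, G_fix S.toBase i m hτ0]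
  · have hQe0 : Psi S Q 0 (n+1) Q.e = S.toBase.G 0 τ (Psi S P 0 n P.e) + rho S 0 (n+1) (muS S * P.e) := by
      show Q.F 0 Q.e + rho S 0 (n+1) Q.e = _
      simp only [hQ, nu_mu]
    have hQs0 : Psi S Q 0 (n+1) Q.s = S.toBase.G 0 τ (Psi S P 0 n P.s) + rho S 0 (n+1) (muS S * P.s) := by
      show Q.F 0 Q.s + rho S 0 (n+1) Q.s = _
      simp only [hQ, nu_mu]
    have hQe1 : Psi S Q 1 (n+1) Q.e = S.toBase.G 1 τ (Psi S P 1 n P.e) + rho S 1 (n+1) (muS S * P.e) := by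
      show Q.F 1 Q.e + rho S 1 (n+1) Q.e = _
      simp only [hQ, nu_mu]
    have hQs1 : Psi S Q 1 (n+1) Q.s = S.toBase.G 1 τ (Psi S P 1 n P.s) + rho S 1 (n+1) (muS S * P.s) := by
      show Q.F 1 Q.s + rho S 1 (n+1) Q.s = _
      simp only [hQ, nu_mu]
    have h0 : (0:ℤ) ≤ ((CrossSet S n P).ncard : ℤ) := by positivity
    simp only [List.map_cons, List.map_nil, List.sum_cons, List.sum_nil, add_zero]
    unfold pcCost
    rw [hQe0, hQs0, hQe1, hQs1]
    omega


lemma chopCore {n : ℕ} {E : Set ℝ} (hEc : E.Countable) :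
    ∀ (N : ℕ) (P : Pc), PieceOK S n E P → (CrossSet S n P).ncard ≤ N →
      ∃ Qs CE ga gb, ChopOut S n P Qs CE ga gb := by
  intro N
  induction N with
  | zero =>
      intro P hOK hcard
      have hfin := crossSet_finite S hOK
      have hemp : CrossSet S n P = ∅ :=
        (Set.ncard_eq_zero hfin).mp (le_antisymm hcard (Nat.zero_le _))
      exact chopBase S hEc hOK hemp
  | succ N ih =>
      intro P hOK hcard
      rcases Set.eq_empty_or_nonempty (CrossSet S n P) with hemp | hne
      · exact chopBase S hEc hOK hemp
      · have hfin := crossSet_finite S hOK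
        have hTne : hfin.toFinset.Nonempty := by
          rwa [Set.Finite.toFinset_nonempty]
        set cx := hfin.toFinset.max' hTne with hcx
        have hcxmem : cx ∈ CrossSet S n P := by
          have := hfin.toFinset.max'_mem hTne
          rwa [Set.Finite.mem_toFinset] at this
        have hcxmax : ∀ x ∈ CrossSet S n P, x ≤ cx := by
          intro x hx
          apply hfin.toFinset.le_max'
          rwa [Set.Finite.mem_toFinset]
        obtain ⟨hcxIoo, i₀, m₀, hm₀⟩ := hcxmem
        set Pl : Pc := ⟨P.s, cx, P.F⟩ with hPl
        set Pr : Pc := ⟨cx, P.e, P.F⟩ with hPr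
        have hOKl : PieceOK S n E Pl := ⟨hcxIoo.1.le, fun i =>
          ⟨(hOK.2 i).1.mono (Icc_subset_Icc (le_refl _) hcxIoo.2.le),
           (hOK.2 i).2.1.mono (Icc_subset_Icc (le_refl _) hcxIoo.2.le),
           fun u hu huE => (hOK.2 i).2.2 u (Icc_subset_Icc (le_refl _) hcxIoo.2.le hu) huE⟩⟩
        have hOKr : PieceOK S n E Pr := ⟨hcxIoo.2.le, fun i =>
          ⟨(hOK.2 i).1.mono (Icc_subset_Icc hcxIoo.1.le (le_refl _)),
           (hOK.2 i).2.1.mono (Icc_subset_Icc hcxIoo.1.le (le_refl _)),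
           fun u hu huE => (hOK.2 i).2.2 u (Icc_subset_Icc hcxIoo.1.le (le_refl _) hu) huE⟩⟩
        have hCl : CrossSet S n Pl ⊆ CrossSet S n P \ {cx} := by
          rintro u ⟨hu, j, m, hm⟩
          exact ⟨⟨⟨hu.1, lt_trans hu.2 hcxIoo.2⟩, j, m, hm⟩, ne_of_lt hu.2⟩
        have hCr : CrossSet S n Pr = ∅ := by
          ext u
          simp only [Set.mem_empty_iff_false, iff_false]
          rintro ⟨hu, j, m, hm⟩
          have hmem : u ∈ CrossSet S n P := ⟨⟨lt_trans hcxIoo.1 hu.1, hu.2⟩, j, m, hm⟩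
          exact absurd (hcxmax u hmem) (not_le.mpr hu.1)
        have hkey : (CrossSet S n Pl).ncard + 1 ≤ (CrossSet S n P).ncard := by
          have h1 : (CrossSet S n Pl).ncard ≤ (CrossSet S n P \ {cx}).ncard :=
            Set.ncard_le_ncard hCl hfin.diff
          have h2 : (CrossSet S n P \ {cx}).ncard < (CrossSet S n P).ncard :=
            Set.ncard_diff_singleton_lt_of_mem ⟨hcxIoo, i₀, m₀, hm₀⟩ hfin
          omega
        obtain ⟨Qsl, CEl, gal, gbl, hOl⟩ := ih Pl hOKl (by omega)
        obtain ⟨Qsr, CEr, gar, gbr, hOr⟩ := ih Pr hOKr (by rw [hCr]; simp)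
        obtain ⟨hc1, ⟨hql, hhl, hll⟩, hch1, hpo1, hlen1, hgaf1, hgbf1, hgae1, hgbe1, hcost1⟩ := hOl
        obtain ⟨hc2, ⟨hqr, hhr, hlr⟩, hch2, hpo2, hlen2, hgaf2, hgbf2, hgae2, hgbe2, hcost2⟩ := hOr
        -- normalized restatements
        have hll' : (Qsl.getLast hql).e = muS S * cx := hll
        have hhr' : (Qsr.head hqr).s = muS S * cx := hhr
        have hlen1' : (Qsl.length : ℤ) ≤ ((CrossSet S n Pl).ncard : ℤ) + 1 := hlen1
        have hlen2' : (Qsr.length : ℤ) ≤ 1 := by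
          have := hlen2
          rw [hCr] at this
          simpa using this
        have hcost1' : (Qsl.map (pcCost S (n+1))).sum ≤
            (⌊2 * (gbl 0 + rho S 0 (n+1) (muS S * cx))⌋ -
              ⌊2 * (gal 0 + rho S 0 (n+1) (muS S * P.s))⌋) +
            (⌊2 * (gbl 1 + rho S 1 (n+1) (muS S * cx))⌋ -
              ⌊2 * (gal 1 + rho S 1 (n+1) (muS S * P.s))⌋) +
            ((CrossSet S n Pl).ncard : ℤ) := hcost1
        have hcost2' : (Qsr.map (pcCost S (n+1))).sum ≤
            (⌊2 * (gbr 0 + rho S 0 (n+1) (muS S * P.e))⌋ -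
              ⌊2 * (gar 0 + rho S 0 (n+1) (muS S * cx))⌋) +
            (⌊2 * (gbr 1 + rho S 1 (n+1) (muS S * P.e))⌋ -
              ⌊2 * (gar 1 + rho S 1 (n+1) (muS S * cx))⌋) := by
          have h9 := hcost2
          rw [hCr] at h9
          simpa using h9
        have hr : ∀ i : Fin 2, ⌊2 * (gbl i + rho S i (n+1) (muS S * cx))⌋
            - ⌊2 * (gar i + rho S i (n+1) (muS S * cx))⌋ ≤ 1 := by
          intro i
          have h1 : ⌊2 * gbl i⌋ = ⌊2 * Psi S P i n cx⌋ := hgbf1 i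
          have h2 : ⌊2 * gar i⌋ = ⌊2 * Psi S P i n cx⌋ := hgaf2 i
          exact floor_shift_le (h1.trans h2.symm) _
        have hzero : ⌊2 * (gbl i₀ + rho S i₀ (n+1) (muS S * cx))⌋
            - ⌊2 * (gar i₀ + rho S i₀ (n+1) (muS S * cx))⌋ = 0 := by
          have hb : gbl i₀ = Psi S P i₀ n cx := hgbe1 i₀ ⟨m₀, hm₀⟩
          have hc : gar i₀ = Psi S P i₀ n cx := hgae2 i₀ ⟨m₀, hm₀⟩
          rw [hb, hc]
          omega
        have hqsne : Qsl ++ Qsr ≠ [] := by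
          intro hc
          exact hql (List.append_eq_nil_iff.mp hc).1
        refine ⟨Qsl ++ Qsr, CEl ∪ CEr, gal, gbr,
          hc1.union hc2, ⟨hqsne, ?_, ?_⟩, ?_, ?_, ?_, ?_, ?_, ?_, ?_, ?_⟩
        · rw [List.head_append_left hql]
          exact hhl
        · rw [List.getLast_append_of_ne_nil _ hqr]
          exact hlr
        · apply List.IsChain.append hch1 hch2
          intro x hx y hy
          rw [List.getLast?_eq_getLast_of_ne_nil hql] at hx
          rw [List.head?_eq_head hqr] at hy
          simp only [Option.mem_def, Option.some_inj] at hx hy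
          rw [← hx, ← hy]
          rw [hll', hhr']
        · intro Q hQ
          rcases List.mem_append.mp hQ with h | h
          · exact PieceOK_mono S Set.subset_union_left (hpo1 Q h)
          · exact PieceOK_mono S Set.subset_union_right (hpo2 Q h)
        · rw [List.length_append]
          push_cast
          omega
        · exact hgaf1
        · exact hgbf2
        · exact hgae1
        · exact hgbe2
        · rw [List.map_append, List.sum_append]
          have hJ : (⌊2 * (gbl 0 + rho S 0 (n+1) (muS S * cx))⌋
              - ⌊2 * (gar 0 + rho S 0 (n+1) (muS S * cx))⌋) +
              (⌊2 * (gbl 1 + rho S 1 (n+1) (muS S * cx))⌋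
              - ⌊2 * (gar 1 + rho S 1 (n+1) (muS S * cx))⌋) ≤ 1 := by
            have hi : i₀ = 0 ∨ i₀ = 1 := by
              rcases i₀ with ⟨v, hv⟩
              interval_cases v
              · exact Or.inl (Fin.ext (by simp))
              · exact Or.inr (Fin.ext (by simp))
            rcases hi with h | h
            · rw [h] at hzero
              have := hr 1
              omega
            · rw [h] at hzero
              have := hr 0
              omega
          push_cast
          omega


lemma chop {n : ℕ} {E : Set ℝ} (hEc : E.Countable) {P : Pc} (hOK : PieceOK S n E P) :
    ∃ Qs CE, CE.Countable ∧
      (∃ hq : Qs ≠ [], (Qs.head hq).s = muS S * P.s ∧ (Qs.getLast hq).e = muS S * P.e) ∧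
      Chain Qs ∧ (∀ Q ∈ Qs, PieceOK S (n+1) CE Q) ∧
      (Qs.length : ℤ) ≤ pcCost S n P + 1 ∧
      (Qs.map (pcCost S (n+1))).sum ≤ 2 * pcCost S n P +
        (⌊2 * rho S 0 (n+1) (muS S * P.e)⌋ - ⌊2 * rho S 0 (n+1) (muS S * P.s)⌋) +
        (⌊2 * rho S 1 (n+1) (muS S * P.e)⌋ - ⌊2 * rho S 1 (n+1) (muS S * P.s)⌋) + 2 := by
  obtain ⟨Qs, CE, ga, gb, hc, hend, hch, hpo, hlen, hgaf, hgbf, _, _, hcost⟩ :=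
    chopCore S hEc (CrossSet S n P).ncard P hOK (le_refl _)
  have hcard := crossSet_card_le S hOK
  have w1 : ∀ i : Fin 2, ⌊2 * (gb i + rho S i (n+1) (muS S * P.e))⌋ ≤
      ⌊2 * Psi S P i n P.e⌋ + ⌊2 * rho S i (n+1) (muS S * P.e)⌋ + 1 := by
    intro i
    have h := floor_add_le_add (2 * gb i) (2 * rho S i (n+1) (muS S * P.e))
    rw [hgbf i] at h
    rw [mul_add]
    omega
  have w2 : ∀ i : Fin 2, ⌊2 * Psi S P i n P.s⌋ + ⌊2 * rho S i (n+1) (muS S * P.s)⌋ ≤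
      ⌊2 * (ga i + rho S i (n+1) (muS S * P.s))⌋ := by
    intro i
    have h := floor_add_floor_le (2 * ga i) (2 * rho S i (n+1) (muS S * P.s))
    rw [hgaf i] at h
    rw [mul_add]
    omega
  refine ⟨Qs, CE, hc, hend, hch, hpo, by omega, ?_⟩
  have hw10 := w1 0
  have hw11 := w1 1
  have hw20 := w2 0
  have hw21 := w2 1
  have hpc : pcCost S n P = (⌊2 * Psi S P 0 n P.e⌋ - ⌊2 * Psi S P 0 n P.s⌋) +
      (⌊2 * Psi S P 1 n P.e⌋ - ⌊2 * Psi S P 1 n P.s⌋) := rfl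
  rw [hpc] at hcard ⊢
  omega

lemma assemble {n : ℕ} {E : Set ℝ} (hEc : E.Countable) :
    ∀ (L : List Pc) (hne : L ≠ []), Chain L → (∀ P ∈ L, PieceOK S n E P) →
      ∃ (Q : List Pc) (E' : Set ℝ), E'.Countable ∧ Chain Q ∧
        (∀ R ∈ Q, PieceOK S (n+1) E' R) ∧
        (∃ hq : Q ≠ [], (Q.head hq).s = muS S * (L.head hne).s ∧
          (Q.getLast hq).e = muS S * (L.getLast hne).e) ∧
        (Q.length : ℤ) ≤ (L.map (pcCost S n)).sum + L.length ∧
        (Q.map (pcCost S (n+1))).sum ≤ 2 * (L.map (pcCost S n)).sum +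
          (⌊2 * rho S 0 (n+1) (muS S * (L.getLast hne).e)⌋ -
            ⌊2 * rho S 0 (n+1) (muS S * (L.head hne).s)⌋) +
          (⌊2 * rho S 1 (n+1) (muS S * (L.getLast hne).e)⌋ -
            ⌊2 * rho S 1 (n+1) (muS S * (L.head hne).s)⌋) + 2 * L.length := by
  intro L
  induction L with
  | nil => intro hne; exact absurd rfl hne
  | cons P rest ih =>
      intro hne hchain hOKs
      cases rest with
      | nil =>
          obtain ⟨Qs, CE, hc, ⟨hq, hh, hl⟩, hch, hpo, hlen, hcost⟩ :=
            chop S hEc (hOKs P (List.mem_cons_self))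
          refine ⟨Qs, CE, hc, hch, hpo, ⟨hq, ?_, ?_⟩, ?_, ?_⟩
          · simpa using hh
          · simpa using hl
          · simp only [List.map_cons, List.map_nil, List.sum_cons, List.sum_nil,
              List.length_cons, List.length_nil]
            push_cast
            omega
          · simp only [List.map_cons, List.map_nil, List.sum_cons, List.sum_nil,
              List.length_cons, List.length_nil, List.head_cons, List.getLast_singleton]
            push_cast
            omega
      | cons Q' rest' =>
          have hch' := List.isChain_cons_cons.mp hchain
          have hrne : (Q' :: rest') ≠ [] := by simp
          obtain ⟨Qs, CE, hcA, ⟨hqA, hhA, hlA⟩, hchA, hpoA, hlenA, hcostA⟩ :=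
            chop S hEc (hOKs P (List.mem_cons_self))
          obtain ⟨Qr, Er, hcB, hchB, hpoB, ⟨hqB, hhB, hlB⟩, hlenB, hcostB⟩ :=
            ih hrne hch'.2 (fun R hR => hOKs R (List.mem_cons_of_mem P hR))
          have hqne : Qs ++ Qr ≠ [] := fun hcon => hqA (List.append_eq_nil_iff.mp hcon).1
          have hjunc : (Qs.getLast hqA).e = (Qr.head hqB).s := by
            rw [hlA, hhB, List.head_cons, hch'.1]
          refine ⟨Qs ++ Qr, CE ∪ Er, hcA.union hcB, ?_, ?_, ⟨hqne, ?_, ?_⟩, ?_, ?_⟩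
          · apply List.IsChain.append hchA hchB
            intro x hx y hy
            rw [List.getLast?_eq_getLast_of_ne_nil hqA] at hx
            rw [List.head?_eq_head hqB] at hy
            simp only [Option.mem_def, Option.some_inj] at hx hy
            rw [← hx, ← hy]
            exact hjunc
          · intro R hR
            rcases List.mem_append.mp hR with h | h
            · exact PieceOK_mono S Set.subset_union_left (hpoA R h)
            · exact PieceOK_mono S Set.subset_union_right (hpoB R h)
          · rw [List.head_append_left hqA, hhA, List.head_cons]
          · rw [List.getLast_append_of_ne_nil _ hqB, hlB, List.getLast_cons hrne]
          · rw [List.length_append]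
            simp only [List.map_cons, List.sum_cons, List.length_cons] at hlenB ⊢
            push_cast at hlenA hlenB ⊢
            omega
          · rw [List.map_append, List.sum_append]
            simp only [List.map_cons, List.sum_cons, List.length_cons, List.head_cons,
              List.getLast_cons hrne] at hcostB ⊢
            rw [hch'.1] at hcostA
            push_cast at hcostA hcostB hlenA hlenB ⊢
            omega


/-- Existence of decompositions with linearly bounded cost. -/
lemma coeT_zero : coeT 0 = (0 : Circ) := rfl

lemma decEx (hlam : 3 < Real.exp S.toBase.lam) (n : ℕ) :
    ∃ L E, DecOK S n L E ∧ (lCost S n L : ℝ) ≤ Kc S.toBase * S.len n := by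
  have ha := S.toBase.a_pos
  have hkap := S.toBase.kappa_pos
  have hbeta := S.toBase.beta_pos
  have hexp : (0:ℝ) < Real.exp S.toBase.lam := Real.exp_pos _
  have hden : 0 < 1 - 3 / Real.exp S.toBase.lam := by
    rw [sub_pos, div_lt_one hexp]
    exact hlam
  have hCrho : 0 < Crho S.toBase := by
    unfold Crho
    have h1 : (0:ℝ) < (S.toBase.kappa:ℝ) := by exact_mod_cast hkap
    positivity
  have hKc : Crho S.toBase ≤ Kc S.toBase := by
    unfold Kc
    rw [le_div_iff₀ hden]
    nlinarith [div_nonneg (by norm_num : (0:ℝ) ≤ 3) hexp.le]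
  have hKpos : 0 < Kc S.toBase := lt_of_lt_of_le hCrho hKc
  have hrb : ∀ (m : ℕ) (i : Fin 2), ((⌊2 * rho S i m (S.len m)⌋ - ⌊2 * rho S i m 0⌋ : ℤ) : ℝ)
      ≤ 2 * ((S.toBase.kappa:ℝ) * S.toBase.beta * S.len m + S.toBase.kappa) + 1 := by
    intro m i
    have h1 : rho S i m 0 ≤ rho S i m (S.len m) := rho_mono S i m (len_pos S m).le
    have h2 := floor_diff_le (2 * rho S i m 0) (2 * rho S i m (S.len m)) (by linarith)
    have h3 := rho_upper S i m (u := 0) (v := S.len m) (len_pos S m).le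
    push_cast at h2 ⊢
    linarith
  induction n with
  | zero =>
      set P0 : Pc := ⟨0, S.len 0, fun _ _ => 0⟩ with hP0
      have hOK0 : PieceOK S 0 ∅ P0 := by
        refine ⟨(len_pos S 0).le, ?_⟩
        intro i
        refine ⟨continuousOn_const, monotoneOn_const, ?_⟩
        intro u _ _
        show pj i (S.theta 0 u) = coeT 0
        have hth : S.theta 0 u = (0, 0) := rfl
        rw [hth, coeT_zero]
        fin_cases i <;> rfl
      refine ⟨[P0], ∅, ⟨Set.countable_empty, by simp [Chain, List.Chain'], ?_,
        ⟨by simp, by simp [hP0], by simp [hP0]⟩⟩, ?_⟩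
      · intro P hP
        rw [List.mem_singleton] at hP
        subst hP
        exact hOK0
      · have hc : lCost S 0 [P0] = pcCost S 0 P0 + 1 := by
          simp [lCost]
        have hpc : pcCost S 0 P0 = (⌊2 * rho S 0 0 (S.len 0)⌋ - ⌊2 * rho S 0 0 0⌋) +
            (⌊2 * rho S 1 0 (S.len 0)⌋ - ⌊2 * rho S 1 0 0⌋) := by
          show (⌊2 * Psi S P0 0 0 P0.e⌋ - ⌊2 * Psi S P0 0 0 P0.s⌋) +
            (⌊2 * Psi S P0 1 0 P0.e⌋ - ⌊2 * Psi S P0 1 0 P0.s⌋) = _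
          have he : P0.e = S.len 0 := rfl
          have hs : P0.s = 0 := rfl
          have hps : ∀ (i : Fin 2) (u : ℝ), Psi S P0 i 0 u = rho S i 0 u := by
            intro i u
            show P0.F i u + rho S i 0 u = rho S i 0 u
            show (0:ℝ) + rho S i 0 u = rho S i 0 u
            ring
          rw [he, hs, hps 0, hps 0, hps 1, hps 1]
        rw [hc, hpc]
        have h0 := hrb 0 0
        have h1 := hrb 0 1
        have hlen0 : S.len 0 = S.toBase.a := len_zero S
        rw [hlen0] at h0 h1 ⊢
        have hCa : Crho S.toBase * S.toBase.a
            = 4 * ((S.toBase.kappa:ℝ) * S.toBase.beta) * S.toBase.a +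
              (4 * S.toBase.kappa + 3) := by
          unfold Crho
          rw [add_mul, div_mul_cancel₀ _ ha.ne']
          ring
        have hKa : Crho S.toBase * S.toBase.a ≤ Kc S.toBase * S.toBase.a :=
          mul_le_mul_of_nonneg_right hKc ha.le
        push_cast
        push_cast at h0 h1
        nlinarith
  | succ n ihn =>
      obtain ⟨L, E, hD, hcost⟩ := ihn
      obtain ⟨hEc, hchain, hOKs, hne, hhead, hlast⟩ := hD
      obtain ⟨Q, E', hcE', hchQ, hpoQ, ⟨hq, hhq, hlq⟩, hlenQ, hcostQ⟩ :=
        assemble S hEc L hne hchain hOKs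
      rw [hhead] at hhq
      rw [hlast] at hlq
      rw [hhead, hlast] at hcostQ
      have hμ0 : muS S * (0:ℝ) = 0 := mul_zero _
      have hμlen : muS S * S.len n = S.len (n+1) := (len_succ S n).symm
      rw [hμ0] at hhq hcostQ
      rw [hμlen] at hlq hcostQ
      refine ⟨Q, E', ⟨hcE', hchQ, hpoQ, hq, hhq, hlq⟩, ?_⟩
      have hZ : (lCost S (n+1) Q : ℤ) ≤ 3 * lCost S n L +
          ((⌊2 * rho S 0 (n+1) (S.len (n+1))⌋ - ⌊2 * rho S 0 (n+1) 0⌋) +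
           (⌊2 * rho S 1 (n+1) (S.len (n+1))⌋ - ⌊2 * rho S 1 (n+1) 0⌋)) := by
        unfold lCost
        omega
      have h0 := hrb (n+1) 0
      have h1 := hrb (n+1) 1
      have hlge := len_ge_a S (n+1)
      have hlp := len_pos S (n+1)
      have hZR : (lCost S (n+1) Q : ℝ) ≤ 3 * (lCost S n L : ℝ) +
          Crho S.toBase * S.len (n+1) := by
        have hcast : (lCost S (n+1) Q : ℝ) ≤ 3 * (lCost S n L : ℝ) +
            (((⌊2 * rho S 0 (n+1) (S.len (n+1))⌋ - ⌊2 * rho S 0 (n+1) 0⌋ : ℤ) : ℝ) +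
             ((⌊2 * rho S 1 (n+1) (S.len (n+1))⌋ - ⌊2 * rho S 1 (n+1) 0⌋ : ℤ) : ℝ)) := by
          exact_mod_cast hZ
        have hCl : 4 * ((S.toBase.kappa:ℝ) * S.toBase.beta) * S.len (n+1) +
            (4 * S.toBase.kappa + 3) ≤ Crho S.toBase * S.len (n+1) := by
          unfold Crho
          have hfrac : ((4:ℝ) * S.toBase.kappa + 3) / S.toBase.a * S.toBase.a
              = 4 * S.toBase.kappa + 3 := by
            field_simp
          have h9 : ((4:ℝ) * S.toBase.kappa + 3) / S.toBase.a * S.toBase.a ≤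
              ((4:ℝ) * S.toBase.kappa + 3) / S.toBase.a * S.len (n+1) := by
            apply mul_le_mul_of_nonneg_left hlge
            positivity
          ring_nf
          ring_nf at h9 hfrac
          nlinarith
        linarith
      have hlen' : S.len (n+1) = Real.exp S.toBase.lam * S.len n := len_succ S n
      have hKcd : Kc S.toBase * (1 - 3 / Real.exp S.toBase.lam) = Crho S.toBase := by
        unfold Kc
        exact div_mul_cancel₀ _ hden.ne'
      have hfinal : 3 * (Kc S.toBase * S.len n) + Crho S.toBase * S.len (n+1)
          = Kc S.toBase * S.len (n+1) := by
        rw [hlen']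
        have hx : Kc S.toBase - Kc S.toBase * 3 / Real.exp S.toBase.lam = Crho S.toBase := by
          rw [← hKcd]; ring
        rw [← hx]
        field_simp
        ring
      have hmono3 : 3 * (lCost S n L : ℝ) ≤ 3 * (Kc S.toBase * S.len n) := by linarith
      linarith


/-! #### Measure-theoretic helpers -/

lemma list_vol_union {α : Type*} (L : List α) (g : α → Set ℝ) :
    volume (⋃ P ∈ L, g P) ≤ (L.map (fun P => volume (g P))).sum := by
  induction L with
  | nil => simp
  | cons P rest ih =>
      rw [List.map_cons, List.sum_cons]
      have hset : (⋃ Q ∈ (P :: rest), g Q) = g P ∪ ⋃ Q ∈ rest, g Q := by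
        ext u
        simp [List.mem_cons, exists_eq_or_imp]
      rw [hset]
      exact le_trans (measure_union_le _ _) (add_le_add_right ih _)

lemma list_ofReal_sum (l : List ℝ) (h : ∀ x ∈ l, 0 ≤ x) :
    (l.map ENNReal.ofReal).sum = ENNReal.ofReal l.sum := by
  induction l with
  | nil => simp
  | cons x rest ih =>
      rw [List.map_cons, List.sum_cons, List.sum_cons,
        ENNReal.ofReal_add (h x List.mem_cons_self)
          (List.sum_nonneg (fun y hy => h y (List.mem_cons_of_mem x hy))),
        ih (fun y hy => h y (List.mem_cons_of_mem x hy))]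

lemma list_ofReal_sum' {α : Type*} (L : List α) (f : α → ℝ) (h : ∀ P ∈ L, 0 ≤ f P) :
    (L.map (fun P => ENNReal.ofReal (f P))).sum = ENNReal.ofReal ((L.map f).sum) := by
  induction L with
  | nil => simp
  | cons P rest ih =>
      rw [List.map_cons, List.sum_cons, List.map_cons, List.sum_cons,
        ENNReal.ofReal_add (h P List.mem_cons_self)
          (List.sum_nonneg (fun y hy => by
            obtain ⟨Q, hQ, rfl⟩ := List.mem_map.mp hy
            exact h Q (List.mem_cons_of_mem P hQ))),
        ih (fun Q hQ => h Q (List.mem_cons_of_mem P hQ))]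

lemma list_sum_int_cast {α : Type*} (L : List α) (f : α → ℤ) :
    (L.map (fun P => ((f P : ℤ) : ℝ))).sum = ((L.map f).sum : ℝ) := by
  induction L with
  | nil => simp
  | cons P rest ih =>
      rw [List.map_cons, List.sum_cons, List.map_cons, List.sum_cons, Int.cast_add, ih]

lemma list_sum_mul_right {α : Type*} (L : List α) (f : α → ℝ) (c : ℝ) :
    (L.map (fun P => f P * c)).sum = (L.map f).sum * c := by
  induction L with
  | nil => simp
  | cons P rest ih => simp [List.map_cons, List.sum_cons, ih, add_mul]


lemma measure_bound' (hlam : 3 < Real.exp S.toBase.lam) (n : ℕ) (i : Fin 2)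
    (ξ : ℝ) (hξ : 0 < ξ) :
    volume {u : ℝ | u ∈ Icc 0 (S.len n) ∧
        (dist (S.psiI n i u) (coeT 0) ≤ ξ ∨ dist (S.psiI n i u) (coeT (1/2)) ≤ ξ)}
      ≤ ENNReal.ofReal (c3c S.toBase * ξ * S.len n) := by
  have ha := S.toBase.a_pos
  have hlen : 0 < S.len n := by
    unfold Setting.len
    positivity
  set Bd := {u : ℝ | u ∈ Icc 0 (S.len n) ∧
      (dist (S.psiI n i u) (coeT 0) ≤ ξ ∨ dist (S.psiI n i u) (coeT (1/2)) ≤ ξ)} with hBd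
  rcases le_or_gt (1/4 : ℝ) ξ with hbig | hsmall
  · have h1 : Bd ⊆ Icc 0 (S.len n) := fun u hu => hu.1
    have hc3 : (4:ℝ) ≤ c3c S.toBase := le_max_left _ _
    calc volume Bd ≤ volume (Icc 0 (S.len n)) := measure_mono h1
      _ = ENNReal.ofReal (S.len n - 0) := Real.volume_Icc
      _ ≤ ENNReal.ofReal (c3c S.toBase * ξ * S.len n) := by
          apply ENNReal.ofReal_le_ofReal
          have h2 : (1:ℝ) ≤ c3c S.toBase * ξ := by nlinarith
          nlinarith
  · obtain ⟨L, E, ⟨hEc, hchain, hOKs, hne, hhead, hlast⟩, hcost⟩ := decEx S hlam n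
    set c := S.toBase.beta * S.toBase.c' with hcdef
    have hcpos : 0 < c := mul_pos S.toBase.beta_pos S.toBase.c'_pos
    set MF := fun P : Pc => Finset.Icc (⌊2 * Psi S P i n P.s⌋ - 2) (⌊2 * Psi S P i n P.e⌋ + 2)
      with hMF
    set W := fun (P : Pc) (m : ℤ) => {u ∈ Icc P.s P.e | |Psi S P i n u - (m:ℝ)/2| ≤ ξ}
      with hW
    have hsub : Bd ⊆ E ∪ ⋃ P ∈ L, ⋃ m ∈ MF P, W P m := by
      intro u hu
      rcases Classical.em (u ∈ E) with huE | huE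
      · exact Or.inl huE
      · right
        have hu1 : u ∈ Icc ((L.head hne).s) ((L.getLast hne).e) := by
          rw [hhead, hlast]; exact hu.1
        obtain ⟨P, hP, hPu⟩ := Set.mem_iUnion₂.mp
          (chain_cover L hne hchain (fun P hP => (hOKs P hP).1) hu1)
        have hOK := hOKs P hP
        have hval : S.psiI n i u = coeT (Psi S P i n u) := by
          rw [psiI_pj]; exact psi_lift S hOK i hPu huE
        obtain ⟨m, hm⟩ : ∃ m : ℤ, |Psi S P i n u - (m:ℝ)/2| ≤ ξ := by
          rcases hu.2 with hd | hd
          · rw [hval] at hd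
            obtain ⟨m₀, hm₀⟩ := dist_coe_exists hd
            refine ⟨2*m₀, ?_⟩
            have : ((2*m₀ : ℤ):ℝ)/2 = (m₀:ℝ) := by push_cast; ring
            rw [this]
            simpa using hm₀
          · rw [hval] at hd
            obtain ⟨m₀, hm₀⟩ := dist_coe_exists hd
            refine ⟨2*m₀+1, ?_⟩
            have h2 : Psi S P i n u - ((2*m₀+1 : ℤ):ℝ)/2 = Psi S P i n u - 1/2 - m₀ := by
              push_cast; ring
            rw [h2]
            exact hm₀
        have habs := abs_le.mp hm
        have hPs : P.s ∈ Icc P.s P.e := ⟨le_refl _, hOK.1⟩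
        have hPe : P.e ∈ Icc P.s P.e := ⟨hOK.1, le_refl _⟩
        have hmono := (Psi_strictMonoOn S hOK i).monotoneOn
        have h1 : Psi S P i n P.s ≤ Psi S P i n u := hmono hPs hPu hPu.1
        have h2 : Psi S P i n u ≤ Psi S P i n P.e := hmono hPu hPe hPu.2
        have hf1 : (⌊2 * Psi S P i n P.s⌋ : ℝ) ≤ 2 * Psi S P i n P.s := Int.floor_le _
        have hf2 : 2 * Psi S P i n P.e < (⌊2 * Psi S P i n P.e⌋ : ℝ) + 1 :=
          Int.lt_floor_add_one _
        have hmIcc : m ∈ Finset.Icc (⌊2 * Psi S P i n P.s⌋ - 2) (⌊2 * Psi S P i n P.e⌋ + 2) := by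
          rw [Finset.mem_Icc]
          constructor
          · have h5 : ((⌊2 * Psi S P i n P.s⌋ - 2 : ℤ):ℝ) ≤ (m:ℝ) := by push_cast; linarith
            exact_mod_cast h5
          · have h5 : (m:ℝ) ≤ ((⌊2 * Psi S P i n P.e⌋ + 2 : ℤ):ℝ) := by push_cast; linarith
            exact_mod_cast h5
        exact Set.mem_biUnion hP (Set.mem_biUnion hmIcc ⟨hPu, hm⟩)
    have hWvol : ∀ P ∈ L, ∀ m : ℤ, volume (W P m) ≤ ENNReal.ofReal (4*ξ/c) := by
      intro P hP m
      rcases Set.eq_empty_or_nonempty (W P m) with hemp | ⟨u₀, hu₀⟩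
      · rw [hemp]; simp
      · have hsub2 : W P m ⊆ Icc (u₀ - 2*ξ/c) (u₀ + 2*ξ/c) := by
          intro u hu
          have hd : |Psi S P i n u - Psi S P i n u₀| ≤ 2*ξ := by
            have h3 := abs_sub_le (Psi S P i n u) ((m:ℝ)/2) (Psi S P i n u₀)
            have h4 : |(m:ℝ)/2 - Psi S P i n u₀| ≤ ξ := by
              rw [abs_sub_comm]; exact hu₀.2
            linarith [hu.2]
          have habs := abs_le.mp hd
          have hr : 0 ≤ 2*ξ/c := div_nonneg (by linarith) hcpos.le
          rcases le_total u u₀ with hle | hle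
          · have hrate := Psi_rate S (hOKs P hP) i hu.1 hu₀.1 hle
            have h5 : u₀ - u ≤ 2*ξ/c := by
              rw [le_div_iff₀ hcpos]
              nlinarith
            exact ⟨by linarith, by linarith⟩
          · have hrate := Psi_rate S (hOKs P hP) i hu₀.1 hu.1 hle
            have h5 : u - u₀ ≤ 2*ξ/c := by
              rw [le_div_iff₀ hcpos]
              nlinarith
            exact ⟨by linarith, by linarith⟩
        calc volume (W P m) ≤ volume (Icc (u₀ - 2*ξ/c) (u₀ + 2*ξ/c)) := measure_mono hsub2
          _ = ENNReal.ofReal ((u₀ + 2*ξ/c) - (u₀ - 2*ξ/c)) := Real.volume_Icc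
          _ = ENNReal.ofReal (4*ξ/c) := by congr 1; ring
    have hpiece : ∀ P ∈ L, volume (⋃ m ∈ MF P, W P m)
        ≤ ENNReal.ofReal (((pcCost S n P : ℝ) + 5) * (4*ξ/c)) := by
      intro P hP
      have hOK := hOKs P hP
      refine le_trans (measure_biUnion_finset_le _ _) ?_
      refine le_trans (Finset.sum_le_sum (fun m _ => hWvol P hP m)) ?_
      rw [Finset.sum_const, nsmul_eq_mul]
      have hX0 : (0:ℤ) ≤ ⌊2 * Psi S P i n P.e⌋ - ⌊2 * Psi S P i n P.s⌋ := by
        have hPs : P.s ∈ Icc P.s P.e := ⟨le_refl _, hOK.1⟩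
        have hPe : P.e ∈ Icc P.s P.e := ⟨hOK.1, le_refl _⟩
        have := (Psi_strictMonoOn S hOK i).monotoneOn hPs hPe hOK.1
        have := Int.floor_le_floor (by linarith : 2 * Psi S P i n P.s ≤ 2 * Psi S P i n P.e)
        omega
    -- card of MF P
      have hcardZ : ((Finset.Icc (⌊2 * Psi S P i n P.s⌋ - 2)
            (⌊2 * Psi S P i n P.e⌋ + 2)).card : ℤ)
          = (⌊2 * Psi S P i n P.e⌋ - ⌊2 * Psi S P i n P.s⌋) + 5 := by
        rw [Int.card_Icc]
        omega
      have hXle : (⌊2 * Psi S P i n P.e⌋ - ⌊2 * Psi S P i n P.s⌋) ≤ pcCost S n P := by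
        have hn0 := pcCost_nonneg S (E := E) (n := n) (P := P) hOK
        have hP0 : (0:ℤ) ≤ ⌊2 * Psi S P 0 n P.e⌋ - ⌊2 * Psi S P 0 n P.s⌋ := by
          have hPs : P.s ∈ Icc P.s P.e := ⟨le_refl _, hOK.1⟩
          have hPe : P.e ∈ Icc P.s P.e := ⟨hOK.1, le_refl _⟩
          have := (Psi_strictMonoOn S hOK 0).monotoneOn hPs hPe hOK.1
          have := Int.floor_le_floor (by linarith : 2 * Psi S P 0 n P.s ≤ 2 * Psi S P 0 n P.e)
          omega
        have hP1 : (0:ℤ) ≤ ⌊2 * Psi S P 1 n P.e⌋ - ⌊2 * Psi S P 1 n P.s⌋ := by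
          have hPs : P.s ∈ Icc P.s P.e := ⟨le_refl _, hOK.1⟩
          have hPe : P.e ∈ Icc P.s P.e := ⟨hOK.1, le_refl _⟩
          have := (Psi_strictMonoOn S hOK 1).monotoneOn hPs hPe hOK.1
          have := Int.floor_le_floor (by linarith : 2 * Psi S P 1 n P.s ≤ 2 * Psi S P 1 n P.e)
          omega
        unfold pcCost
        fin_cases i
        · show (⌊2 * Psi S P 0 n P.e⌋ - ⌊2 * Psi S P 0 n P.s⌋) ≤ _
          omega
        · show (⌊2 * Psi S P 1 n P.e⌋ - ⌊2 * Psi S P 1 n P.s⌋) ≤ _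
          omega
      have hcardR : ((MF P).card : ℝ) ≤ (pcCost S n P : ℝ) + 5 := by
        have hEq : (MF P).card = (Finset.Icc (⌊2 * Psi S P i n P.s⌋ - 2)
            (⌊2 * Psi S P i n P.e⌋ + 2)).card := rfl
        have h6 : ((MF P).card : ℤ) ≤ pcCost S n P + 5 := by rw [hEq]; omega
        exact_mod_cast h6
      have hcast : ((MF P).card : ENNReal) = ENNReal.ofReal ((MF P).card : ℝ) := by
        rw [ENNReal.ofReal_natCast]
      rw [hcast, ← ENNReal.ofReal_mul (by positivity)]
      apply ENNReal.ofReal_le_ofReal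
      apply mul_le_mul_of_nonneg_right hcardR
      exact div_nonneg (by linarith) hcpos.le
    refine le_trans (measure_mono hsub) (le_trans (measure_union_le _ _) ?_)
    rw [Set.Countable.measure_zero hEc, zero_add]
    refine le_trans (list_vol_union L _) ?_
    have hsum1 : (L.map (fun P => volume (⋃ m ∈ MF P, W P m))).sum
        ≤ (L.map (fun P => ENNReal.ofReal (((pcCost S n P : ℝ) + 5) * (4*ξ/c)))).sum := by
      apply List.sum_le_sum
      intro P hP
      exact hpiece P hP
    refine le_trans hsum1 ?_
    have hent : ∀ P ∈ L, (0:ℝ) ≤ ((pcCost S n P : ℝ) + 5) * (4*ξ/c) := by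
      intro P hP
      have := pcCost_nonneg S (E := E) (n := n) (P := P) (hOKs P hP)
      have h0 : (0:ℝ) ≤ (pcCost S n P : ℝ) := by exact_mod_cast this
      have : (0:ℝ) ≤ 4*ξ/c := div_nonneg (by linarith) hcpos.le
      nlinarith
    rw [list_ofReal_sum' L _ hent]
    apply ENNReal.ofReal_le_ofReal
    rw [list_sum_mul_right]
    have hsplit : (L.map (fun P => (pcCost S n P : ℝ) + 5)).sum
        = (L.map (fun P => ((pcCost S n P : ℤ) : ℝ))).sum + 5 * L.length := by
      induction L with
      | nil => simp
      | cons P rest ih => simp [List.map_cons, List.sum_cons, ih]; ring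
    rw [hsplit, list_sum_int_cast]
    set X := (((L.map (pcCost S n)).sum : ℤ) : ℝ) with hXdef
    set k := (L.length : ℝ) with hkdef
    have hX0 : 0 ≤ X := by
      rw [hXdef]
      have : (0:ℤ) ≤ (L.map (pcCost S n)).sum := by
        apply List.sum_nonneg
        intro x hx
        obtain ⟨P, hP, rfl⟩ := List.mem_map.mp hx
        exact pcCost_nonneg S (E := E) (n := n) (P := P) (hOKs P hP)
      exact_mod_cast this
    have hk0 : 0 ≤ k := by rw [hkdef]; positivity
    have hcostR : X + k ≤ Kc S.toBase * S.len n := by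
      have h7 : ((lCost S n L : ℤ) : ℝ) = X + k := by
        rw [hXdef, hkdef]
        unfold lCost
        push_cast
        ring
      rw [h7] at hcost
      exact hcost
    have hc3r : 20 * Kc S.toBase / c ≤ c3c S.toBase := le_max_right _ _
    have hD : (0:ℝ) ≤ 4*ξ/c := div_nonneg (by linarith) hcpos.le
    have s1 : (X + 5*k) * (4*ξ/c) ≤ (5*(X + k)) * (4*ξ/c) :=
      mul_le_mul_of_nonneg_right (by linarith) hD
    have s2 : (5*(X + k)) * (4*ξ/c) ≤ (5*(Kc S.toBase * S.len n)) * (4*ξ/c) :=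
      mul_le_mul_of_nonneg_right (by linarith) hD
    have s3 : (5*(Kc S.toBase * S.len n)) * (4*ξ/c) = (20 * Kc S.toBase / c) * ξ * S.len n := by
      ring
    have s4 : (20 * Kc S.toBase / c) * ξ * S.len n ≤ c3c S.toBase * ξ * S.len n :=
      mul_le_mul_of_nonneg_right (mul_le_mul_of_nonneg_right hc3r hξ.le) hlen.le
    nlinarith [s1, s2, s3, s4]


/-- The final measure estimate. -/
lemma measure_bound (hlam : 3 < Real.exp S.toBase.lam) (n : ℕ) (i : Fin 2)
    (ξ : ℝ) (hξ : 0 < ξ) :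
    volume {u : ℝ | u ∈ Icc 0 (S.len n) ∧
        (dist (S.psiI n i u) (coeT 0) ≤ ξ ∨ dist (S.psiI n i u) (coeT (1/2)) ≤ ξ)}
      ≤ ENNReal.ofReal (c3c S.toBase * ξ * S.len n) :=
  measure_bound' S hlam n i ξ hξ

end Main

end Stmt16

/- STATEMENT 16 (Lemma 5.1): if `e^λ > 3`, there is `c₃ > 0`, depending only on the base
   data, such that for all `n`, `i` and `ξ > 0`, the normalized Lebesgue measure of the set
   of `u ∈ [0, e^{λn} a]` with `ψ_n^i(u)` within distance `ξ` of `{0, 1/2} ⊆ 𝕋` is at most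
   `c₃ ξ`. -/
theorem stmt_16 (B : Base) (hlam : 3 < Real.exp B.lam) :
    ∃ c₃ : ℝ, 0 < c₃ ∧ ∀ S : Setting, S.toBase = B →
      ∀ (n : ℕ) (i : Fin 2), ∀ ξ : ℝ, 0 < ξ →
        volume {u : ℝ | u ∈ Icc 0 (S.len n) ∧
            (dist (S.psiI n i u) (coeT 0) ≤ ξ ∨ dist (S.psiI n i u) (coeT (1/2)) ≤ ξ)}
          ≤ ENNReal.ofReal (c₃ * ξ * S.len n) := by
  refine ⟨Stmt16.c3c B, lt_of_lt_of_le (by norm_num) (le_max_left _ _), ?_⟩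
  intro S hS n i ξ hξ
  have h := Stmt16.measure_bound S (by rw [hS]; exact hlam) n i ξ hξ
  rwa [hS] at h

end
end
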